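/- For every composition s = (s(1),…,s(a)) with s(i) ≥ 2 for all i, the set of s-trees is in bijection with the set of noncrossing (s−𝟏)-partitions of the set [|s|−a]; in particular these two sets have the same cardinality. -/

import Mathlib

/-- A planar rooted tree: a root together with a (possibly empty) ordered list of subtrees. -/
inductive PTree : Type where
  | node : List PTree → PTree

namespace PTree

/-- The signature of a planar rooted tree: the numbers of children of its internal
nodes, listed in preorder. -/
def signature : PTree → List ℕ
  | node [] => []
  | node (t :: ts) =>
    (t :: ts).length :: ((t :: ts).attach.map (fun x => signature x.1)).flatten
decreasing_by
  have := List.sizeOf_lt_of_mem x.2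
  simp at this ⊢
  omega

/-- The preorder word of a planar rooted tree: `true` (= N) for each internal node and
`false` (= E) for each leaf, nodes listed in preorder. -/
def word : PTree → List Bool
  | node ts => (!ts.isEmpty) :: (ts.attach.map (fun x => word x.1)).flatten
decreasing_by
  have := List.sizeOf_lt_of_mem x.2
  simp at this ⊢
  omega

mutual
def leaves : PTree → ℕ
  | node [] => 1
  | node (c :: cs) => leaves c + leavesF cs
def leavesF : List PTree → ℕ
  | [] => 0
  | t :: ts => leaves t + leavesF ts
end

def offs : ℕ → List PTree → List ℕ
  | _, [] => []
  | o, t :: ts => o :: offs (o + leaves t) ts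

mutual
def blocksB : PTree → ℕ → List (Finset ℕ)
  | node [], _ => []
  | node (c :: cs), o =>
      ((offs (o + leaves c) cs).toFinset ∪ (blocksB c o).headI) ::
        ((blocksB c o).tail ++ blocksF cs (o + leaves c))
def blocksF : List PTree → ℕ → List (Finset ℕ)
  | [], _ => []
  | t :: ts, o => blocksB t o ++ blocksF ts (o + leaves t)
end

mutual
def chunksB : PTree → List (List ℕ)
  | node [] => []
  | node (c :: cs) => (cs.length :: (chunksB c).headI) :: ((chunksB c).tail ++ chunksF cs)
def chunksF : List PTree → List (List ℕ)
  | [] => []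
  | t :: ts => chunksB t ++ chunksF ts
end

def sigF (ts : List PTree) : List ℕ := (ts.map signature).flatten

theorem signature_node (cs : List PTree) :
    signature (node cs) = match cs with
      | [] => []
      | c :: cs' => (cs'.length + 1) :: (signature c ++ sigF cs') :=
  match cs with
  | [] => by rw [signature]
  | c :: cs' => by
    rw [signature]
    simp [sigF, List.attach_map_val]

theorem sigF_nil : sigF [] = [] := rfl
theorem sigF_cons (t : PTree) (ts : List PTree) : sigF (t :: ts) = signature t ++ sigF ts := by
  simp [sigF]

/-- Strong induction for `PTree`. -/
theorem ind' (P : PTree → Prop) (h : ∀ cs, (∀ t ∈ cs, P t) → P (node cs)) : ∀ T, P T := by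
  have H : ∀ n (T : PTree), sizeOf T < n → P T := by
    intro n
    induction n with
    | zero => intro T h0; omega
    | succ n ih =>
      rintro ⟨cs⟩ hs
      apply h
      intro t ht
      apply ih
      have := List.sizeOf_lt_of_mem ht
      simp at hs ⊢
      omega
  intro T; exact H (sizeOf T + 1) T (by omega)

theorem leaves_pos (T : PTree) : 1 ≤ leaves T := by
  induction T using ind' with
  | h cs ih =>
    match cs with
    | [] => simp [leaves]
    | c :: cs' =>
      have := ih c (by simp)
      rw [leaves]
      omega

theorem leavesF_nonneg_mem {ts : List PTree} {t : PTree} (h : t ∈ ts) :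
    leaves t ≤ leavesF ts := by
  induction ts with
  | nil => simp at h
  | cons a as ih =>
    rw [leavesF]
    rcases List.mem_cons.mp h with rfl | h2
    · omega
    · have := ih h2
      omega

theorem leaves_internal (c : PTree) (cs : List PTree) :
    leaves (node (c :: cs)) = leaves c + leavesF cs := by rw [leaves]

/-- `leaves T + (signature T).length = (signature T).sum + 1` -/
theorem leaves_sig (T : PTree) :
    leaves T + (signature T).length = (signature T).sum + 1 := by
  induction T using ind' with
  | h cs ih =>
    match cs with
    | [] => simp [signature_node, leaves]
    | c :: cs' =>
      have hF : ∀ ts, (∀ t ∈ ts, leaves t + (signature t).length = (signature t).sum + 1) →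
          leavesF ts + (sigF ts).length = (sigF ts).sum + ts.length := by
        intro ts hts
        induction ts with
        | nil => simp [leavesF, sigF_nil]
        | cons a as ihl =>
          rw [leavesF, sigF_cons]
          have h1 := hts a (by simp)
          have h2 := ihl (fun t ht => hts t (by simp [ht]))
          simp only [List.length_append, List.sum_append, List.length_cons]
          omega
      have h1 := ih c (by simp)
      have h2 := hF cs' (fun t ht => ih t (by simp [ht]))
      rw [leaves_internal, signature_node]
      simp only [List.length_cons, List.length_append, List.sum_cons, List.sum_append]
      omega

theorem offs_mem_bounds {o x : ℕ} {ts : List PTree} (h : x ∈ offs o ts) :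
    o ≤ x ∧ x < o + leavesF ts := by
  induction ts generalizing o with
  | nil => simp [offs] at h
  | cons a as ih =>
    rw [offs] at h
    rw [leavesF]
    have ha := leaves_pos a
    rcases List.mem_cons.mp h with rfl | h2
    · omega
    · have := ih h2
      omega

theorem offs_self_mem {o : ℕ} {t : PTree} {ts : List PTree} : o ∈ offs o (t :: ts) := by
  rw [offs]; simp

theorem offs_length (o : ℕ) (ts : List PTree) : (offs o ts).length = ts.length := by
  induction ts generalizing o with
  | nil => rfl
  | cons a as ih => rw [offs]; simp [ih]

theorem offs_append (o : ℕ) (p q : List PTree) :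
    offs o (p ++ q) = offs o p ++ offs (o + leavesF p) q := by
  induction p generalizing o with
  | nil => simp [offs, leavesF]
  | cons a as ih =>
    rw [List.cons_append, offs, offs, ih, leavesF]
    simp [Nat.add_assoc]

theorem offs_sorted (o : ℕ) (ts : List PTree) : (offs o ts).Pairwise (· < ·) := by
  induction ts generalizing o with
  | nil => simp [offs]
  | cons a as ih =>
    rw [offs]
    refine List.pairwise_cons.mpr ⟨?_, ih _⟩
    intro b hb
    have := offs_mem_bounds hb
    have := leaves_pos a
    omega

theorem offs_nodup (o : ℕ) (ts : List PTree) : (offs o ts).Nodup :=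
  (offs_sorted o ts).imp (fun h => Nat.ne_of_lt h)

theorem headI_append_tail_flatten {α : Type*} (l : List (List α)) :
    l.headI ++ l.tail.flatten = l.flatten := by
  cases l with
  | nil => rfl
  | cons a l => simp

theorem chunksF_flatten_aux (ts : List PTree)
    (h : ∀ t ∈ ts, (chunksB t).flatten = (signature t).map (· - 1)) :
    (chunksF ts).flatten = (sigF ts).map (· - 1) := by
  induction ts with
  | nil => simp [chunksF, sigF_nil]
  | cons a as ih =>
    rw [chunksF, sigF_cons]
    simp only [List.flatten_append, List.map_append]
    rw [h a (by simp), ih (fun t ht => h t (by simp [ht]))]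

theorem chunksB_flatten (T : PTree) :
    (chunksB T).flatten = (signature T).map (· - 1) := by
  induction T using ind' with
  | h cs ih =>
    match cs with
    | [] => simp [chunksB, signature_node]
    | c :: cs' =>
      rw [chunksB, signature_node]
      simp only [List.flatten_cons, List.flatten_append, List.map_cons, List.map_append,
        List.cons_append]
      congr 1
      rw [← List.append_assoc, headI_append_tail_flatten, ih c (by simp),
        chunksF_flatten_aux cs' (fun t ht => ih t (by simp [ht]))]

theorem chunksF_ne_nil_aux (ts : List PTree)
    (h : ∀ t ∈ ts, ∀ c ∈ chunksB t, c ≠ []) : ∀ c ∈ chunksF ts, c ≠ [] := by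
  induction ts with
  | nil => simp [chunksF]
  | cons a as ih =>
    rw [chunksF]
    intro ch hch
    rcases List.mem_append.mp hch with h4 | h4
    · exact h a (by simp) ch h4
    · exact ih (fun t ht => h t (by simp [ht])) ch h4

theorem chunksB_ne_nil (T : PTree) : ∀ c ∈ chunksB T, c ≠ [] := by
  induction T using ind' with
  | h cs ih =>
    match cs with
    | [] => simp [chunksB]
    | c :: cs' =>
      rw [chunksB]
      intro ch hch
      rcases List.mem_cons.mp hch with rfl | h2
      · simp
      · rcases List.mem_append.mp h2 with h3 | h3
        · exact ih c (by simp) ch (List.mem_of_mem_tail h3)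
        · exact chunksF_ne_nil_aux cs' (fun t ht => ih t (by simp [ht])) ch h3

theorem blocksF_append (o : ℕ) (p q : List PTree) :
    blocksF (p ++ q) o = blocksF p o ++ blocksF q (o + leavesF p) := by
  induction p generalizing o with
  | nil => simp [blocksF, leavesF]
  | cons a as ih =>
    rw [List.cons_append, blocksF, blocksF, ih, leavesF]
    simp [Nat.add_assoc]

theorem chunksF_append (p q : List PTree) :
    chunksF (p ++ q) = chunksF p ++ chunksF q := by
  induction p with
  | nil => simp [chunksF]
  | cons a as ih => rw [List.cons_append, chunksF, chunksF, ih]; simp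

theorem mem_blocksF_iff {B : Finset ℕ} {ts : List PTree} {o : ℕ} :
    B ∈ blocksF ts o ↔ ∃ p t q, ts = p ++ t :: q ∧ B ∈ blocksB t (o + leavesF p) := by
  induction ts generalizing o with
  | nil => simp [blocksF]
  | cons a as ih =>
    rw [blocksF, List.mem_append]
    constructor
    · rintro (h | h)
      · exact ⟨[], a, as, by simp [leavesF], by simpa [leavesF] using h⟩
      · obtain ⟨p, t, q, rfl, hB⟩ := ih.mp h
        exact ⟨a :: p, t, q, by simp, by rw [leavesF] at *; convert hB using 2; omega⟩
    · rintro ⟨p, t, q, hts, hB⟩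
      cases p with
      | nil =>
        simp only [List.nil_append] at hts
        injection hts with h1 h2
        subst h1; subst h2
        left
        simpa [leavesF] using hB
      | cons p' ps =>
        rw [List.cons_append] at hts
        injection hts with h1 h2
        subst h1; subst h2
        right
        exact ih.mpr ⟨ps, t, q, rfl, by rw [leavesF] at hB; convert hB using 2; omega⟩

theorem leavesF_append (p q : List PTree) : leavesF (p ++ q) = leavesF p + leavesF q := by
  induction p with
  | nil => simp [leavesF]
  | cons a as ih => rw [List.cons_append, leavesF, leavesF, ih]; omega

theorem mem_sigF {t : PTree} {ts : List PTree} (h : t ∈ ts) {x : ℕ}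
    (hx : x ∈ signature t) : x ∈ sigF ts := by
  rw [sigF, List.mem_flatten]
  exact ⟨signature t, List.mem_map.mpr ⟨t, h, rfl⟩, hx⟩

theorem blocksB_leaf (o : ℕ) : blocksB (node []) o = [] := by rw [blocksB]

theorem blocksB_node (c : PTree) (cs : List PTree) (o : ℕ) :
    blocksB (node (c :: cs)) o =
      ((offs (o + leaves c) cs).toFinset ∪ (blocksB c o).headI) ::
        ((blocksB c o).tail ++ blocksF cs (o + leaves c)) := by rw [blocksB]

theorem chunksB_leaf : chunksB (node []) = [] := by rw [chunksB]

theorem chunksB_node (c : PTree) (cs : List PTree) :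
    chunksB (node (c :: cs)) =
      (cs.length :: (chunksB c).headI) :: ((chunksB c).tail ++ chunksF cs) := by rw [chunksB]

theorem blocksF_nil (o : ℕ) : blocksF [] o = [] := by rw [blocksF]
theorem blocksF_cons (t : PTree) (ts : List PTree) (o : ℕ) :
    blocksF (t :: ts) o = blocksB t o ++ blocksF ts (o + leaves t) := by rw [blocksF]
theorem chunksF_nil : chunksF [] = [] := by rw [chunksF]
theorem chunksF_cons (t : PTree) (ts : List PTree) :
    chunksF (t :: ts) = chunksB t ++ chunksF ts := by rw [chunksF]

/-- The bundle of structural facts about the block family of a tree. -/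
structure GoodAt (T : PTree) (o : ℕ) : Prop where
  union : ∀ x : ℕ, (∃ B ∈ blocksB T o, x ∈ B) ↔ (o + 1 ≤ x ∧ x + 1 ≤ o + leaves T)
  nonem : ∀ B ∈ blocksB T o, B.Nonempty
  disj : (blocksB T o).Pairwise (fun B C => Disjoint B C)
  sorted : (blocksB T o).Pairwise (fun B C => B.min < C.min)
  headm : ∀ B ∈ (blocksB T o).head?, o + 1 ∈ B
  nc : ∀ B ∈ blocksB T o, ∀ C ∈ blocksB T o, ∀ x y z w : ℕ, x < y → y < z → z < w →
        x ∈ B → z ∈ B → y ∈ C → w ∈ C → B = C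
  cards : (chunksB T).map List.sum = (blocksB T o).map Finset.card

def Good (T : PTree) : Prop := ∀ o, GoodAt T o

theorem GoodAt.block_sub {T : PTree} {o : ℕ} (g : GoodAt T o) :
    ∀ B ∈ blocksB T o, ∀ x ∈ B, o + 1 ≤ x ∧ x + 1 ≤ o + leaves T :=
  fun B hB x hx => (g.union x).mp ⟨B, hB, hx⟩

theorem min_lt_min_of {B C : Finset ℕ} {a : ℕ} (ha : a ∈ B) (h : ∀ y ∈ C, a < y) :
    B.min < C.min := by
  have h1 : B.min ≤ (a : WithTop ℕ) := Finset.min_le ha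
  have h2 : (a : WithTop ℕ) < C.min := by
    rcases C.eq_empty_or_nonempty with rfl | hC
    · rw [Finset.min_empty]
      exact WithTop.coe_lt_top a
    · rw [← Finset.coe_min' hC]
      exact WithTop.coe_lt_coe.mpr (h _ (C.min'_mem hC))
  exact lt_of_le_of_lt h1 h2

section Forest

variable {ts : List PTree}

theorem blocksF_sub (hg : ∀ t ∈ ts, Good t) (o : ℕ) :
    ∀ B ∈ blocksF ts o, ∀ x ∈ B, o + 1 ≤ x ∧ x + 1 ≤ o + leavesF ts := by
  intro B hB x hx
  obtain ⟨p, t, q, rfl, hBt⟩ := mem_blocksF_iff.mp hB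
  have hb := ((hg t (by simp)) (o + leavesF p)).block_sub B hBt x hx
  rw [leavesF_append, leavesF]
  omega

theorem blocksF_nonem (hg : ∀ t ∈ ts, Good t) (o : ℕ) : ∀ B ∈ blocksF ts o, B.Nonempty := by
  intro B hB
  obtain ⟨p, t, q, rfl, hBt⟩ := mem_blocksF_iff.mp hB
  exact ((hg t (by simp)) _).nonem B hBt

theorem blocksF_union (hg : ∀ t ∈ ts, Good t) (o : ℕ) :
    ∀ x : ℕ, (∃ B ∈ blocksF ts o, x ∈ B) ↔
      (o ≤ x ∧ x + 1 ≤ o + leavesF ts ∧ x ∉ offs o ts) := by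
  induction ts generalizing o with
  | nil => intro x; rw [blocksF_nil]; simp [leavesF, offs]
  | cons a as ih =>
    intro x
    rw [blocksF_cons, offs, leavesF]
    have ha := leaves_pos a
    constructor
    · intro ⟨B, hB, hx⟩
      rcases List.mem_append.mp hB with h | h
      · have hb := ((hg a (by simp)) o).block_sub B h x hx
        refine ⟨by omega, by omega, ?_⟩
        intro hmem
        rcases List.mem_cons.mp hmem with rfl | h2
        · omega
        · have := offs_mem_bounds h2
          omega
      · have h2 := (ih (fun t ht => hg t (by simp [ht])) (o + leaves a) x).mp ⟨B, h, hx⟩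
        refine ⟨by omega, by omega, ?_⟩
        intro hmem
        rcases List.mem_cons.mp hmem with rfl | h3
        · omega
        · exact h2.2.2 h3
    · rintro ⟨h1, h2, h3⟩
      have hxo : x ≠ o := fun h => h3 (h ▸ List.mem_cons_self)
      by_cases hcase : x + 1 ≤ o + leaves a
      · obtain ⟨B, hB, hxB⟩ := (((hg a (by simp)) o).union x).mpr ⟨by omega, hcase⟩
        exact ⟨B, List.mem_append.mpr (Or.inl hB), hxB⟩
      · have h4 : x ∉ offs (o + leaves a) as := fun hm => h3 (List.mem_cons.mpr (Or.inr hm))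
        obtain ⟨B, hB, hxB⟩ := ((ih (fun t ht => hg t (by simp [ht])) (o + leaves a) x).mpr
          ⟨by omega, by omega, h4⟩)
        exact ⟨B, List.mem_append.mpr (Or.inr hB), hxB⟩

theorem blocksF_notin_offs (hg : ∀ t ∈ ts, Good t) (o : ℕ) :
    ∀ B ∈ blocksF ts o, ∀ x ∈ B, x ∉ offs o ts := by
  intro B hB x hx
  exact ((blocksF_union hg o x).mp ⟨B, hB, hx⟩).2.2

theorem blocksF_disj (hg : ∀ t ∈ ts, Good t) (o : ℕ) :
    (blocksF ts o).Pairwise (fun B C => Disjoint B C) := by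
  induction ts generalizing o with
  | nil => rw [blocksF_nil]; exact List.Pairwise.nil
  | cons a as ih =>
    rw [blocksF_cons]
    rw [List.pairwise_append]
    refine ⟨((hg a (by simp)) o).disj, ih (fun t ht => hg t (by simp [ht])) _, ?_⟩
    intro B hB C hC
    rw [Finset.disjoint_left]
    intro x hxB hxC
    have h1 := ((hg a (by simp)) o).block_sub B hB x hxB
    have h2 := blocksF_sub (fun t ht => hg t (by simp [ht])) _ C hC x hxC
    omega

theorem blocksF_sorted (hg : ∀ t ∈ ts, Good t) (o : ℕ) :
    (blocksF ts o).Pairwise (fun B C => B.min < C.min) := by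
  induction ts generalizing o with
  | nil => rw [blocksF_nil]; exact List.Pairwise.nil
  | cons a as ih =>
    rw [blocksF_cons, List.pairwise_append]
    refine ⟨((hg a (by simp)) o).sorted, ih (fun t ht => hg t (by simp [ht])) _, ?_⟩
    intro B hB C hC
    obtain ⟨b, hb⟩ := ((hg a (by simp)) o).nonem B hB
    refine min_lt_min_of hb ?_
    intro y hy
    have h1 := ((hg a (by simp)) o).block_sub B hB b hb
    have h2 := blocksF_sub (fun t ht => hg t (by simp [ht])) _ C hC y hy
    omega

theorem blocksF_nc (hg : ∀ t ∈ ts, Good t) (o : ℕ) :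
    ∀ B ∈ blocksF ts o, ∀ C ∈ blocksF ts o, ∀ x y z w : ℕ, x < y → y < z → z < w →
      x ∈ B → z ∈ B → y ∈ C → w ∈ C → B = C := by
  induction ts generalizing o with
  | nil => intro B hB; rw [blocksF_nil] at hB; simp at hB
  | cons a as ih =>
    intro B hB C hC x y z w h1 h2 h3 hxB hzB hyC hwC
    rw [blocksF_cons] at hB hC
    have ga := (hg a (by simp)) o
    have hgs : ∀ t ∈ as, Good t := fun t ht => hg t (by simp [ht])
    rcases List.mem_append.mp hB with hB' | hB' <;> rcases List.mem_append.mp hC with hC' | hC'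
    · exact ga.nc B hB' C hC' x y z w h1 h2 h3 hxB hzB hyC hwC
    · have b1 := ga.block_sub B hB' z hzB
      have b2 := blocksF_sub hgs _ C hC' y hyC
      omega
    · have b1 := blocksF_sub hgs _ B hB' x hxB
      have b2 := ga.block_sub C hC' y hyC
      omega
    · exact ih hgs _ B hB' C hC' x y z w h1 h2 h3 hxB hzB hyC hwC

theorem blocksF_cards (hg : ∀ t ∈ ts, Good t) (o : ℕ) :
    (chunksF ts).map List.sum = (blocksF ts o).map Finset.card := by
  induction ts generalizing o with
  | nil => rw [blocksF_nil, chunksF_nil]; rfl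
  | cons a as ih =>
    rw [blocksF_cons, chunksF_cons, List.map_append, List.map_append,
      ((hg a (by simp)) o).cards, ih (fun t ht => hg t (by simp [ht])) _]

end Forest

theorem leavesF_pos {ts : List PTree} (h : ts ≠ []) : 1 ≤ leavesF ts := by
  match ts with
  | [] => simp at h
  | t :: ts' => rw [leavesF]; have := leaves_pos t; omega

theorem tree_shape (c : PTree) (o : ℕ) :
    (blocksB c o = [] ∧ chunksB c = [] ∧ leaves c = 1) ∨
    (blocksB c o = (blocksB c o).headI :: (blocksB c o).tail ∧
     chunksB c = (chunksB c).headI :: (chunksB c).tail) := by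
  obtain ⟨cds⟩ := c
  cases cds with
  | nil => left; exact ⟨blocksB_leaf o, chunksB_leaf, by rw [leaves]⟩
  | cons d ds => right; rw [blocksB_node, chunksB_node]; simp

theorem blocksF_interval {ts : List PTree} (hg : ∀ t ∈ ts, Good t) (o : ℕ) :
    ∀ C ∈ blocksF ts o, ∃ l r : ℕ, (∀ u ∈ C, l < u ∧ u < r) ∧
      (∀ b ∈ offs o ts, b ≤ l ∨ r ≤ b) ∧ o ≤ l := by
  intro C hC
  obtain ⟨p, t, q, rfl, hCt⟩ := mem_blocksF_iff.mp hC
  refine ⟨o + leavesF p, o + leavesF p + leaves t, ?_, ?_, by omega⟩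
  · intro u hu
    have := ((hg t (by simp)) _).block_sub C hCt u hu
    omega
  · intro b hb
    rw [offs_append, offs] at hb
    rcases List.mem_append.mp hb with h | h
    · have := offs_mem_bounds h
      omega
    · rcases List.mem_cons.mp h with rfl | h2
      · omega
      · have := offs_mem_bounds h2
        omega

theorem master : ∀ T : PTree, (∀ x ∈ signature T, 2 ≤ x) → Good T := by
  intro T
  induction T using ind' with
  | h cs ih =>
    intro hsig o
    match cs with
    | [] =>
      have hb := blocksB_leaf o
      have hch := chunksB_leaf
      have hl : leaves (node []) = 1 := by rw [leaves]
      refine ⟨?_, ?_, ?_, ?_, ?_, ?_, ?_⟩ <;> rw [hb]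
      · intro x; simp [hl]
      · simp
      · simp
      · simp
      · simp
      · simp
      · rw [hch]; rfl
    | c :: cs' =>
      have hsig' := hsig
      rw [signature_node] at hsig'
      have hcs' : cs' ≠ [] := by
        have h2 := hsig' _ (List.mem_cons_self)
        intro h; subst h; simp at h2
      have hgc : Good c := ih c (by simp) (fun x hx => hsig' x (by simp [hx]))
      have hgs : ∀ t ∈ cs', Good t := fun t ht =>
        ih t (by simp [ht]) (fun x hx => hsig' x (by simp [List.mem_append, mem_sigF ht hx]))
      have hlc := leaves_pos c
      have hlF : 1 ≤ leavesF cs' := leavesF_pos hcs'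
      have hlnode : leaves (node (c :: cs')) = leaves c + leavesF cs' := leaves_internal c cs'
      set o2 := o + leaves c with ho2
      set A : Finset ℕ := (offs o2 cs').toFinset with hA
      set Hc : Finset ℕ := (blocksB c o).headI with hHc
      -- A facts
      have hAmem : ∀ x ∈ A, o2 ≤ x ∧ x + 1 ≤ o2 + leavesF cs' := by
        intro x hx
        have h2 := offs_mem_bounds (List.mem_toFinset.mp hx)
        omega
      have hAcard : A.card = cs'.length := by
        rw [hA, List.toFinset_card_of_nodup (offs_nodup o2 cs'), offs_length]
      -- Hc facts
      have hHcsub : ∀ x ∈ Hc, o + 1 ≤ x ∧ x + 1 ≤ o2 := by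
        rcases tree_shape c o with ⟨hb0, _, _⟩ | ⟨hbS, _⟩
        · intro x hx
          rw [hHc, hb0] at hx
          exact absurd hx (Finset.notMem_empty x)
        · intro x hx
          exact (hgc o).block_sub Hc (by rw [hbS]; exact List.mem_cons_self) x hx
      have hDisjAHc : Disjoint A Hc := by
        rw [Finset.disjoint_right]
        intro x hx hxA
        have h1 := hHcsub x hx
        have h2 := hAmem x hxA
        omega
      -- tail facts
      have htailmem : ∀ D ∈ (blocksB c o).tail, D ∈ blocksB c o := fun D hD =>
        List.mem_of_mem_tail hD
      have hFtail : ∀ D ∈ (blocksB c o).tail,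
          Disjoint Hc D ∧ Hc ∈ blocksB c o ∧ o + 1 ∈ Hc ∧ ∀ y ∈ D, o + 2 ≤ y := by
        intro D hD
        rcases tree_shape c o with ⟨hb0, _, _⟩ | ⟨hbS, _⟩
        · rw [hb0] at hD; simp at hD
        · have hHcm : Hc ∈ blocksB c o := by rw [hHc, hbS]; exact List.mem_cons_self
          have hdisj : Disjoint Hc D := by
            have h2 := (hgc o).disj
            rw [hbS] at h2
            exact (List.pairwise_cons.mp h2).1 D hD
          have hmHc : o + 1 ∈ Hc := by
            refine (hgc o).headm Hc ?_
            rw [hbS]; rfl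
          refine ⟨hdisj, hHcm, hmHc, ?_⟩
          intro y hy
          have h1 := (hgc o).block_sub D (htailmem D hD) y hy
          have h2 : y ≠ o + 1 := by
            intro h; subst h
            exact (Finset.disjoint_left.mp hdisj hmHc) hy
          omega
      -- union of c's blocks, split version
      have hcunion : ∀ x : ℕ, (x ∈ Hc ∨ ∃ B ∈ (blocksB c o).tail, x ∈ B) ↔
          (o + 1 ≤ x ∧ x + 1 ≤ o2) := by
        intro x
        constructor
        · rintro (h | ⟨B, hB, hx⟩)
          · exact hHcsub x h
          · exact (hgc o).block_sub B (htailmem B hB) x hx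
        · intro h
          rcases tree_shape c o with ⟨hb0, _, hl1⟩ | ⟨hbS, _⟩
          · exfalso
            have hh : o2 = o + 1 := by rw [ho2, hl1]
            omega
          · obtain ⟨B, hB, hx⟩ := ((hgc o).union x).mpr h
            rw [hbS] at hB
            rcases List.mem_cons.mp hB with rfl | h2
            · exact Or.inl hx
            · exact Or.inr ⟨B, h2, hx⟩
      set H : Finset ℕ := A ∪ Hc with hH
      have hmemH : o + 1 ∈ H := by
        rcases tree_shape c o with ⟨hb0, _, hl1⟩ | ⟨hbS, _⟩
        · refine Finset.mem_union_left _ ?_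
          rw [hA]
          refine List.mem_toFinset.mpr ?_
          match cs', hcs' with
          | t :: ts', _ =>
            have : o2 = o + 1 := by rw [ho2, hl1]
            rw [this]
            exact offs_self_mem
        · refine Finset.mem_union_right _ ?_
          refine (hgc o).headm Hc ?_
          rw [hbS]; rfl
      have hHsub : ∀ x ∈ H, o + 1 ≤ x ∧ x + 1 ≤ o + leaves (node (c :: cs')) := by
        intro x hx
        rw [hlnode]
        rcases Finset.mem_union.mp hx with h | h
        · have := hAmem x h; omega
        · have := hHcsub x h; omega
      -- chunk decomposition
      have hcards6 : List.sum (chunksB c).headI = Hc.card ∧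
          ((chunksB c).tail).map List.sum = ((blocksB c o).tail).map Finset.card := by
        rcases tree_shape c o with ⟨hb0, hch0, _⟩ | ⟨hbS, hchS⟩
        · refine ⟨?_, ?_⟩
          · rw [hHc, hb0, hch0]; rfl
          · rw [hb0, hch0]; rfl
        · have h2 := (hgc o).cards
          rw [hbS, hchS] at h2
          simp only [List.map_cons] at h2
          exact List.cons_eq_cons.mp h2
      have hforest_sub := blocksF_sub hgs o2
      have hforest_notin := blocksF_notin_offs hgs o2
      refine ⟨?_, ?_, ?_, ?_, ?_, ?_, ?_⟩
      -- union
      · intro x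
        rw [blocksB_node, hlnode]
        constructor
        · rintro ⟨B, hB, hx⟩
          rcases List.mem_cons.mp hB with rfl | hB'
          · have := hHsub x hx; rw [hlnode] at this; exact this
          · rcases List.mem_append.mp hB' with h | h
            · have h1 := (hgc o).block_sub B (htailmem B h) x hx
              omega
            · have h1 := hforest_sub B h x hx
              omega
        · rintro ⟨h1, h2⟩
          by_cases hx2 : x + 1 ≤ o2
          · rcases (hcunion x).mpr ⟨h1, hx2⟩ with h | ⟨B, hB, hx⟩
            · exact ⟨H, List.mem_cons_self, Finset.mem_union_right _ h⟩
            · exact ⟨B, List.mem_cons.mpr (Or.inr (List.mem_append.mpr (Or.inl hB))), hx⟩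
          · by_cases hoffs : x ∈ offs o2 cs'
            · exact ⟨H, List.mem_cons_self,
                Finset.mem_union_left _ (List.mem_toFinset.mpr hoffs)⟩
            · obtain ⟨B, hB, hx⟩ := (blocksF_union hgs o2 x).mpr ⟨by omega, by omega, hoffs⟩
              exact ⟨B, List.mem_cons.mpr (Or.inr (List.mem_append.mpr (Or.inr hB))), hx⟩
      -- nonem
      · intro B hB
        rw [blocksB_node] at hB
        rcases List.mem_cons.mp hB with rfl | hB'
        · exact ⟨o + 1, hmemH⟩
        · rcases List.mem_append.mp hB' with h | h
          · exact (hgc o).nonem B (htailmem B h)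
          · exact blocksF_nonem hgs o2 B h
      -- disj
      · rw [blocksB_node]
        refine List.pairwise_cons.mpr ⟨?_, ?_⟩
        · intro D hD
          rcases List.mem_append.mp hD with h | h
          · show Disjoint (A ∪ Hc) D
            rw [Finset.disjoint_union_left]
            constructor
            · rw [Finset.disjoint_left]
              intro x hxA hxD
              have h1 := hAmem x hxA
              have h2 := (hgc o).block_sub D (htailmem D h) x hxD
              omega
            · exact (hFtail D h).1
          · show Disjoint (A ∪ Hc) D
            rw [Finset.disjoint_union_left]
            constructor
            · rw [Finset.disjoint_left]
              intro x hxA hxD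
              exact hforest_notin D h x hxD (List.mem_toFinset.mp hxA)
            · rw [Finset.disjoint_left]
              intro x hxHc hxD
              have h1 := hHcsub x hxHc
              have h2 := hforest_sub D h x hxD
              omega
        · rw [List.pairwise_append]
          refine ⟨(hgc o).disj.sublist (List.tail_sublist _), blocksF_disj hgs o2, ?_⟩
          intro B hB C hC
          rw [Finset.disjoint_left]
          intro x hxB hxC
          have h1 := (hgc o).block_sub B (htailmem B hB) x hxB
          have h2 := hforest_sub C hC x hxC
          omega
      -- sorted
      · rw [blocksB_node]
        refine List.pairwise_cons.mpr ⟨?_, ?_⟩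
        · intro D hD
          refine min_lt_min_of hmemH ?_
          intro y hy
          rcases List.mem_append.mp hD with h | h
          · have := (hFtail D h).2.2.2 y hy
            omega
          · have := hforest_sub D h y hy
            omega
        · rw [List.pairwise_append]
          refine ⟨(hgc o).sorted.sublist (List.tail_sublist _), blocksF_sorted hgs o2, ?_⟩
          intro B hB C hC
          obtain ⟨b, hb⟩ := (hgc o).nonem B (htailmem B hB)
          refine min_lt_min_of hb ?_
          intro y hy
          have h1 := (hgc o).block_sub B (htailmem B hB) b hb
          have h2 := hforest_sub C hC y hy
          omega
      -- headm
      · intro B hB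
        rw [blocksB_node] at hB
        simp only [List.head?_cons, Option.mem_some_iff] at hB
        rw [← hB]
        exact hmemH
      -- nc
      · intro B hB C hC x y z w hxy hyz hzw hxB hzB hyC hwC
        rw [blocksB_node] at hB hC
        rcases List.mem_cons.mp hB with rfl | hB' <;> rcases List.mem_cons.mp hC with hCeq | hC'
        · rw [hCeq]
        · rcases List.mem_append.mp hC' with h | h
          · -- B = H, C ∈ tail
            exfalso
            have hwb := (hgc o).block_sub C (htailmem C h) w hwC
            have hzHc : z ∈ Hc := by
              rcases Finset.mem_union.mp hzB with h2 | h2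
              · have := hAmem z h2; omega
              · exact h2
            have hxHc : x ∈ Hc := by
              rcases Finset.mem_union.mp hxB with h2 | h2
              · have := hAmem x h2; omega
              · exact h2
            have heq := (hgc o).nc Hc (hFtail C h).2.1 C (htailmem C h) x y z w hxy hyz hzw
              hxHc hzHc hyC hwC
            rw [heq] at hxHc
            exact (Finset.disjoint_left.mp (heq ▸ (hFtail C h).1) hxHc) hxHc
          · -- B = H, C ∈ forest
            exfalso
            obtain ⟨l, r, hCl, hoffs', hl⟩ := blocksF_interval hgs o2 C h
            have hy' := hCl y hyC
            have hw' := hCl w hwC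
            rcases Finset.mem_union.mp hzB with h2 | h2
            · rcases hoffs' z (List.mem_toFinset.mp h2) with h3 | h3 <;> omega
            · have := hHcsub z h2; omega
        · -- C = H, B elsewhere
          rcases List.mem_append.mp hB' with h | h
          · -- B ∈ tail, C = H
            exfalso
            have hxb := (hgc o).block_sub B (htailmem B h) x hxB
            have hzb := (hgc o).block_sub B (htailmem B h) z hzB
            have hyHc : y ∈ Hc := by
              rcases Finset.mem_union.mp (hCeq ▸ hyC) with h2 | h2
              · have := hAmem y h2; omega
              · exact h2
            obtain ⟨hdisj, hHcm, hmHc, _⟩ := hFtail B h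
            rcases Finset.mem_union.mp (hCeq ▸ hwC) with h2 | h2
            · -- w ∈ A : use o+1 ∈ Hc
              have hx1 : o + 1 < x := by
                have : x ≠ o + 1 := by
                  intro hh; subst hh
                  exact (Finset.disjoint_left.mp hdisj hmHc) hxB
                omega
              have heq := (hgc o).nc Hc hHcm B (htailmem B h) (o+1) x y z hx1 hxy hyz
                hmHc hyHc hxB hzB
              rw [heq] at hmHc
              exact (Finset.disjoint_left.mp (heq ▸ hdisj) hmHc) hmHc
            · -- w ∈ Hc
              have heq := (hgc o).nc B (htailmem B h) Hc hHcm x y z w hxy hyz hzw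
                hxB hzB hyHc h2
              rw [← heq] at hyHc
              exact (Finset.disjoint_left.mp hdisj (heq ▸ hyHc)) hyHc
          · -- B ∈ forest, C = H
            exfalso
            obtain ⟨l, r, hCl, hoffs', hl⟩ := blocksF_interval hgs o2 B h
            have hx' := hCl x hxB
            have hz' := hCl z hzB
            rcases Finset.mem_union.mp (hCeq ▸ hyC) with h2 | h2
            · rcases hoffs' y (List.mem_toFinset.mp h2) with h3 | h3 <;> omega
            · have := hHcsub y h2; omega
        · -- both in rest
          rcases List.mem_append.mp hB' with h | h <;> rcases List.mem_append.mp hC' with h2 | h2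
          · exact (hgc o).nc B (htailmem B h) C (htailmem C h2) x y z w hxy hyz hzw
              hxB hzB hyC hwC
          · exfalso
            have b1 := (hgc o).block_sub B (htailmem B h) z hzB
            have b2 := hforest_sub C h2 y hyC
            omega
          · exfalso
            have b1 := hforest_sub B h x hxB
            have b2 := (hgc o).block_sub C (htailmem C h2) y hyC
            omega
          · exact blocksF_nc hgs o2 B h C h2 x y z w hxy hyz hzw hxB hzB hyC hwC
      -- cards
      · rw [blocksB_node, chunksB_node]
        simp only [List.map_cons, List.map_append]
        congr 1
        · show (cs'.length :: (chunksB c).headI).sum = (A ∪ Hc).card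
          rw [List.sum_cons, hcards6.1, Finset.card_union_of_disjoint hDisjAHc, hAcard]
        · rw [hcards6.2, blocksF_cards hgs o2]

def offsN : ℕ → List ℕ → List ℕ
  | _, [] => []
  | o, m :: ms => o :: offsN (o + m) ms

theorem offsN_mem_le {o b : ℕ} {ms : List ℕ} (h : b ∈ offsN o ms) : o ≤ b := by
  induction ms generalizing o with
  | nil => simp [offsN] at h
  | cons m ms ih =>
    rw [offsN] at h
    rcases List.mem_cons.mp h with rfl | h2
    · exact le_refl b
    · have := ih h2; omega

theorem offsN_mem_cases {o b m : ℕ} {ms : List ℕ} (h : b ∈ offsN o (m :: ms)) :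
    b = o ∨ o + m ≤ b := by
  rw [offsN] at h
  rcases List.mem_cons.mp h with rfl | h2
  · exact Or.inl rfl
  · exact Or.inr (offsN_mem_le h2)

theorem offs_eq_offsN (o : ℕ) (ts : List PTree) : offs o ts = offsN o (ts.map leaves) := by
  induction ts generalizing o with
  | nil => rfl
  | cons a as ih => rw [offs, List.map_cons, offsN, ih]

theorem offsN_inj {o : ℕ} : ∀ {ms1 ms2 : List ℕ}, offsN o ms1 = offsN o ms2 →
    ms1.sum = ms2.sum → ms1 = ms2 := by
  intro ms1
  induction ms1 generalizing o with
  | nil =>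
    intro ms2 h hs
    cases ms2 with
    | nil => rfl
    | cons m ms => rw [offsN, offsN] at h; simp at h
  | cons m1 ms1' ih =>
    intro ms2 h hs
    cases ms2 with
    | nil => rw [offsN, offsN] at h; simp at h
    | cons m2 ms2' =>
      rw [offsN, offsN] at h
      injection h with h1 h2
      rw [List.sum_cons, List.sum_cons] at hs
      by_cases hm : m1 = m2
      · subst hm
        rw [ih h2 (by omega)]
      · -- m1 ≠ m2 : offsN (o+m1) ms1' = offsN (o+m2) ms2' both lists, first elements differ
        exfalso
        rcases ms1' with _ | ⟨a1, r1⟩ <;> rcases ms2' with _ | ⟨a2, r2⟩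
        · simp at hs; omega
        · rw [offsN, offsN] at h2; simp at h2
        · rw [offsN, offsN] at h2; simp at h2
        · rw [offsN, offsN] at h2
          injection h2 with h3 _
          omega

def msOf : ℕ → List ℕ → ℕ → List ℕ
  | o, [], top => [top - o]
  | o, a :: as, top => (a - o) :: msOf a as top

theorem msOf_length (o top : ℕ) (bs : List ℕ) : (msOf o bs top).length = bs.length + 1 := by
  induction bs generalizing o with
  | nil => rfl
  | cons a as ih => rw [msOf]; simp [ih]

theorem msOf_facts {o top : ℕ} : ∀ {bs : List ℕ}, List.Chain (· < ·) o bs →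
    (∀ b ∈ bs, b < top) → o < top →
    offsN o (msOf o bs top) = o :: bs ∧ (msOf o bs top).sum = top - o ∧
      ∀ m ∈ msOf o bs top, 1 ≤ m := by
  intro bs
  induction bs generalizing o with
  | nil =>
    intro _ _ hot
    refine ⟨?_, ?_, ?_⟩
    · rw [msOf, offsN, offsN]
    · rw [msOf]; simp
    · rw [msOf]; intro m hm; simp at hm; omega
  | cons a as ih =>
    intro hch hb hot
    rw [List.Chain, List.isChain_cons_cons] at hch
    have hoa : o < a := hch.1
    have ha : a < top := hb a (by simp)
    obtain ⟨ih1, ih2, ih3⟩ := ih hch.2 (fun b hbm => hb b (by simp [hbm])) ha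
    refine ⟨?_, ?_, ?_⟩
    · rw [msOf, offsN]
      have : o + (a - o) = a := by omega
      rw [this, ih1]
    · rw [msOf, List.sum_cons, ih2]; omega
    · rw [msOf]
      intro m hm
      rcases List.mem_cons.mp hm with rfl | h2
      · omega
      · exact ih3 m h2

theorem foldr_union_mem {L : List (Finset ℕ)} {x : ℕ} :
    x ∈ L.foldr (· ∪ ·) ∅ ↔ ∃ B ∈ L, x ∈ B := by
  induction L with
  | nil => simp
  | cons B L ih => simp [ih]

theorem sum_cards_of_disjoint : ∀ {L : List (Finset ℕ)},
    L.Pairwise (fun B C => Disjoint B C) →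
    (L.map Finset.card).sum = (L.foldr (· ∪ ·) ∅).card := by
  intro L
  induction L with
  | nil => simp
  | cons B L ih =>
    intro hd
    rw [List.pairwise_cons] at hd
    rw [List.map_cons, List.sum_cons, List.foldr_cons, ih hd.2]
    rw [Finset.card_union_of_disjoint]
    rw [Finset.disjoint_right]
    intro x hx hxB
    obtain ⟨C, hC, hxC⟩ := foldr_union_mem.mp hx
    exact Finset.disjoint_left.mp (hd.1 C hC) hxB hxC

theorem map_sub_sum {l : List ℕ} (h : ∀ x ∈ l, 1 ≤ x) :
    (l.map (· - 1)).sum + l.length = l.sum := by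
  induction l with
  | nil => simp
  | cons a as ih =>
    have h1 := h a (by simp)
    have h2 := ih (fun x hx => h x (by simp [hx]))
    simp only [List.map_cons, List.sum_cons, List.length_cons]
    omega

theorem append_eq_append_of_pred {p : Finset ℕ → Prop} :
    ∀ {X1 : List (Finset ℕ)} {Y1 X2 Y2 : List (Finset ℕ)},
    X1 ++ Y1 = X2 ++ Y2 → (∀ B ∈ X1, p B) → (∀ B ∈ Y1, ¬ p B) →
    (∀ B ∈ X2, p B) → (∀ B ∈ Y2, ¬ p B) → X1 = X2 ∧ Y1 = Y2 := by
  intro X1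
  induction X1 with
  | nil =>
    intro Y1 X2 Y2 h _ hY1 hX2 _
    cases X2 with
    | nil => simpa using h
    | cons B X2' =>
      exfalso
      rw [List.nil_append] at h
      have : B ∈ Y1 := by rw [h]; simp
      exact hY1 B this (hX2 B (by simp))
  | cons B X1' ih =>
    intro Y1 X2 Y2 h hX1 hY1 hX2 hY2
    cases X2 with
    | nil =>
      exfalso
      rw [List.nil_append] at h
      have : B ∈ Y2 := by rw [← h]; simp
      exact hY2 B this (hX1 B (by simp))
    | cons B' X2' =>
      rw [List.cons_append, List.cons_append] at h
      injection h with h1 h2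
      subst h1
      obtain ⟨e1, e2⟩ := ih h2 (fun C hC => hX1 C (by simp [hC])) hY1
        (fun C hC => hX2 C (by simp [hC])) hY2
      exact ⟨by rw [e1], e2⟩

theorem prefix_eq_of_sum_map : ∀ {l : List ℕ} {r l' r' : List ℕ},
    l ++ r = l' ++ r' → (∀ x ∈ l ++ r, 2 ≤ x) →
    ((l.map (· - 1)).sum = (l'.map (· - 1)).sum) → l = l' ∧ r = r' := by
  intro l
  induction l with
  | nil =>
    intro r l' r' h hpos hsum
    cases l' with
    | nil => simpa using h
    | cons a' l0 =>
      exfalso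
      rw [List.nil_append] at h
      have ha' : 2 ≤ a' := hpos a' (by rw [h]; simp)
      simp only [List.map_nil, List.sum_nil, List.map_cons, List.sum_cons] at hsum
      omega
  | cons a l0 ih =>
    intro r l' r' h hpos hsum
    cases l' with
    | nil =>
      exfalso
      have ha : 2 ≤ a := hpos a (by simp)
      simp only [List.map_nil, List.sum_nil, List.map_cons, List.sum_cons] at hsum
      omega
    | cons a' l0' =>
      rw [List.cons_append, List.cons_append] at h
      injection h with h1 h2
      subst h1
      simp only [List.map_cons, List.sum_cons] at hsum
      obtain ⟨e1, e2⟩ := ih h2 (fun x hx => hpos x (by simp at hx ⊢; tauto)) (by omega)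
      exact ⟨by rw [e1], e2⟩

theorem mem_head_of_min {B1 : Finset ℕ} {L' : List (Finset ℕ)} {v : ℕ}
    (hsort : (B1 :: L').Pairwise (fun B C => B.min < C.min))
    (hlb : ∀ x ∈ B1, v ≤ x)
    (hex : ∃ B ∈ B1 :: L', v ∈ B) : v ∈ B1 := by
  obtain ⟨B, hB, hvB⟩ := hex
  rcases List.mem_cons.mp hB with rfl | hB'
  · exact hvB
  · exfalso
    have h1 : B1.min < B.min := (List.pairwise_cons.mp hsort).1 B hB'
    have h2 : B.min ≤ (v : WithTop ℕ) := Finset.min_le hvB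
    have h3 : B1.min < (v : WithTop ℕ) := lt_of_lt_of_le h1 h2
    have hne : B1.Nonempty := by
      by_contra hc
      rw [Finset.not_nonempty_iff_eq_empty] at hc
      rw [hc, Finset.min_empty] at h3
      exact absurd h3 (by simp)
    have h4 := hlb (B1.min' hne) (B1.min'_mem hne)
    rw [← Finset.coe_min' hne] at h3
    have : (B1.min' hne : ℕ) < v := WithTop.coe_lt_coe.mp h3
    omega

theorem sort_union_of_lt {X Y : Finset ℕ} (hlt : ∀ x ∈ X, ∀ y ∈ Y, x < y) :
    (X ∪ Y).sort (· ≤ ·) = X.sort (· ≤ ·) ++ Y.sort (· ≤ ·) := by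
  have hnd : (X.sort (· ≤ ·) ++ Y.sort (· ≤ ·)).Nodup := by
    rw [List.nodup_append]
    refine ⟨Finset.sort_nodup _ _, Finset.sort_nodup _ _, ?_⟩
    intro a haX b haY
    have := hlt a (by rwa [← Finset.mem_sort (· ≤ ·)]) b (by rwa [← Finset.mem_sort (· ≤ ·)])
    omega
  have hsorted : (X.sort (· ≤ ·) ++ Y.sort (· ≤ ·)).Pairwise (· ≤ ·) := by
    rw [List.pairwise_append]
    refine ⟨Finset.pairwise_sort _ _, Finset.pairwise_sort _ _, ?_⟩
    intro a ha b hb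
    have := hlt a (by rwa [← Finset.mem_sort (· ≤ ·)]) b (by rwa [← Finset.mem_sort (· ≤ ·)])
    omega
  have hperm : List.Perm ((X ∪ Y).sort (· ≤ ·)) (X.sort (· ≤ ·) ++ Y.sort (· ≤ ·)) := by
    refine List.perm_of_nodup_nodup_toFinset_eq (Finset.sort_nodup _ _) hnd ?_
    rw [Finset.sort_toFinset]
    ext a
    rw [List.toFinset_append, Finset.mem_union, Finset.mem_union]
    rw [List.mem_toFinset, List.mem_toFinset, Finset.mem_sort, Finset.mem_sort]
  exact List.Perm.eq_of_pairwise' (Finset.pairwise_sort _ _) hsorted hperm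

structure Fam (s : List ℕ) (o : ℕ) (L : List (Finset ℕ)) : Prop where
  hs : ∀ x ∈ s, 2 ≤ x
  union : ∀ x : ℕ, (∃ B ∈ L, x ∈ B) ↔ (o + 1 ≤ x ∧ x + s.length ≤ o + s.sum)
  nonem : ∀ B ∈ L, B.Nonempty
  disj : L.Pairwise (fun B C => Disjoint B C)
  sorted : L.Pairwise (fun B C => B.min < C.min)
  nc : ∀ B ∈ L, ∀ C ∈ L, ∀ x y z w : ℕ, x < y → y < z → z < w →
        x ∈ B → z ∈ B → y ∈ C → w ∈ C → B = C
  chunks : ∃ ch : List (List ℕ), (∀ c ∈ ch, c ≠ []) ∧ ch.flatten = s.map (· - 1) ∧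
    ch.map List.sum = L.map Finset.card

structure FamF (ms : List ℕ) (t : List ℕ) (o : ℕ) (L : List (Finset ℕ)) : Prop where
  hs : ∀ x ∈ t, 2 ≤ x
  hm : ∀ m ∈ ms, 1 ≤ m
  union : ∀ x : ℕ, (∃ B ∈ L, x ∈ B) ↔ (o ≤ x ∧ x + 1 ≤ o + ms.sum ∧ x ∉ offsN o ms)
  nonem : ∀ B ∈ L, B.Nonempty
  disj : L.Pairwise (fun B C => Disjoint B C)
  sorted : L.Pairwise (fun B C => B.min < C.min)
  nc : ∀ B ∈ L, ∀ C ∈ L, ∀ x y z w : ℕ, x < y → y < z → z < w →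
        x ∈ B → z ∈ B → y ∈ C → w ∈ C → B = C
  nostrad : ∀ B ∈ L, ∀ b ∈ offsN o ms, (∀ x ∈ B, x < b) ∨ (∀ x ∈ B, b < x)
  chunks : ∃ ch : List (List ℕ), (∀ c ∈ ch, c ≠ []) ∧ ch.flatten = t.map (· - 1) ∧
    ch.map List.sum = L.map Finset.card

theorem fam_of_good (T : PTree) (hT : ∀ x ∈ signature T, 2 ≤ x) (o : ℕ) :
    Fam (signature T) o (blocksB T o) := by
  have g := master T hT o
  have hls := leaves_sig T
  refine ⟨hT, ?_, g.nonem, g.disj, g.sorted, g.nc,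
    ⟨chunksB T, chunksB_ne_nil T, chunksB_flatten T, g.cards⟩⟩
  intro x
  rw [g.union x]
  omega

theorem dropWhile_head_not {α : Type*} (pb : α → Bool) :
    ∀ (l : List α), ∀ x ∈ (l.dropWhile pb).head?, pb x = false := by
  intro l
  induction l with
  | nil => simp [List.dropWhile]
  | cons a as ih =>
    rw [List.dropWhile_cons]
    by_cases h : pb a = true
    · rw [if_pos h]; exact ih
    · rw [if_neg h]
      intro x hx
      simp only [List.head?_cons, Option.mem_some_iff] at hx
      subst hx
      simpa using h

theorem forest_step (N : ℕ)
    (treeIH : ∀ s' : List ℕ, s'.length ≤ N → ∀ o L, Fam s' o L →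
       ∃! T : PTree, signature T = s' ∧ blocksB T o = L) :
    ∀ (ms : List ℕ) (t : List ℕ), t.length ≤ N → ∀ (o : ℕ) (L : List (Finset ℕ)),
      FamF ms t o L →
      ∃! ts : List PTree, sigF ts = t ∧ blocksF ts o = L ∧ ts.map leaves = ms := by
  intro ms
  induction ms with
  | nil =>
    intro t htN o L ff
    have hL : L = [] := by
      rw [List.eq_nil_iff_forall_not_mem]
      intro B hB
      obtain ⟨x, hx⟩ := ff.nonem B hB
      have h := (ff.union x).mp ⟨B, hB, hx⟩
      rw [List.sum_nil] at h
      omega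
    have ht : t = [] := by
      obtain ⟨ch, hne, hfl, hsum⟩ := ff.chunks
      rw [hL] at hsum
      simp only [List.map_nil] at hsum
      rw [List.map_eq_nil_iff] at hsum
      rw [hsum] at hfl
      simp only [List.flatten_nil] at hfl
      exact (List.map_eq_nil_iff.mp hfl.symm)
    subst hL; subst ht
    refine ⟨[], ⟨rfl, blocksF_nil o, rfl⟩, ?_⟩
    rintro ts ⟨_, _, h3⟩
    exact List.map_eq_nil_iff.mp h3
  | cons m1 ms' ih =>
    intro t htN o L ff
    classical
    set pb : Finset ℕ → Bool := fun B => decide (B ⊆ Finset.Ico (o + 1) (o + m1)) with hpb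
    set L1 := L.takeWhile pb with hL1def
    set L2 := L.dropWhile pb with hL2def
    have hsplit : L1 ++ L2 = L := List.takeWhile_append_dropWhile (p := pb) (l := L)
    have hL1mem : ∀ B ∈ L1, B ∈ L := fun B hB => (List.takeWhile_sublist pb).mem hB
    have hL2mem : ∀ B ∈ L2, B ∈ L := fun B hB => (List.dropWhile_sublist pb).mem hB
    have hm1 : 1 ≤ m1 := ff.hm m1 (by simp)
    have hsub : ∀ B ∈ L, ∀ x ∈ B, o + 1 ≤ x ∧ x + 1 ≤ o + m1 + ms'.sum := by
      intro B hB x hx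
      have h := (ff.union x).mp ⟨B, hB, hx⟩
      have hxo : x ≠ o := by
        rintro rfl
        exact h.2.2 (by rw [offsN]; simp)
      rw [List.sum_cons] at h
      constructor
      · omega
      · omega
    have hdichot : ∀ B ∈ L, (∀ x ∈ B, x + 1 ≤ o + m1) ∨ (∀ x ∈ B, o + m1 < x) := by
      intro B hB
      cases ms' with
      | nil =>
        left
        intro x hx
        have := hsub B hB x hx
        simp at this
        omega
      | cons m2 ms'' =>
        have hb : (o + m1) ∈ offsN o (m1 :: m2 :: ms'') := by
          rw [offsN, offsN]; simp
        rcases ff.nostrad B hB (o + m1) hb with h | h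
        · left; intro x hx; have := h x hx; omega
        · right; exact h
    have hpb_iff : ∀ B ∈ L, (pb B = true ↔ ∀ x ∈ B, x + 1 ≤ o + m1) := by
      intro B hB
      constructor
      · intro h x hx
        have h2 := (of_decide_eq_true h) hx
        rw [Finset.mem_Ico] at h2
        omega
      · intro h
        refine decide_eq_true ?_
        intro x hx
        rw [Finset.mem_Ico]
        have h1 := hsub B hB x hx
        have h2 := h x hx
        omega
    have hL1 : ∀ B ∈ L1, ∀ x ∈ B, o + 1 ≤ x ∧ x + 1 ≤ o + m1 := by
      intro B hB x hx
      have hpB := List.mem_takeWhile_imp hB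
      have h2 := (hpb_iff B (hL1mem B hB)).mp hpB x hx
      have h3 := hsub B (hL1mem B hB) x hx
      omega
    have hL2 : ∀ B ∈ L2, ∀ x ∈ B, o + m1 < x := by
      intro B hB x hx
      have hBL := hL2mem B hB
      rcases hdichot B hBL with h | h
      · exfalso
        cases hL2head : L2 with
        | nil => rw [hL2head] at hB; simp at hB
        | cons C L2' =>
          have hCfalse : pb C = false := by
            refine dropWhile_head_not pb L C ?_
            rw [← hL2def, hL2head]; rfl
          have hCL : C ∈ L := hL2mem C (by rw [hL2head]; simp)
          have hCup : ∀ x ∈ C, o + m1 < x := by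
            rcases hdichot C hCL with h2 | h2
            · exfalso
              rw [(hpb_iff C hCL).mpr h2] at hCfalse
              simp at hCfalse
            · exact h2
          rw [hL2head] at hB
          rcases List.mem_cons.mp hB with rfl | hB2
          · have := hCup x hx
            have := h x hx
            omega
          · -- C before B in L2 : C.min < B.min but B has small element
            have hs2 : L2.Pairwise (fun B C => Finset.min B < Finset.min C) :=
              ff.sorted.sublist (List.dropWhile_sublist pb)
            rw [hL2head] at hs2
            have hCB : C.min < B.min := (List.pairwise_cons.mp hs2).1 B hB2
            have hBC : B.min < C.min := min_lt_min_of hx (fun y hy => by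
              have := hCup y hy
              have := h x hx
              omega)
            exact absurd hBC (lt_asymm hCB)
      · exact h x hx
    have hcov1 : ∀ x : ℕ, (∃ B ∈ L1, x ∈ B) ↔ (o + 1 ≤ x ∧ x + 1 ≤ o + m1) := by
      intro x
      constructor
      · rintro ⟨B, hB, hx⟩
        exact hL1 B hB x hx
      · rintro ⟨h1, h2⟩
        have hnot : x ∉ offsN o (m1 :: ms') := by
          intro hmem
          rcases offsN_mem_cases hmem with rfl | h3 <;> omega
        obtain ⟨B, hB, hx⟩ := (ff.union x).mpr ⟨by omega, by rw [List.sum_cons]; omega, hnot⟩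
        rw [← hsplit] at hB
        rcases List.mem_append.mp hB with h | h
        · exact ⟨B, h, hx⟩
        · exfalso
          have := hL2 B h x hx
          omega
    obtain ⟨ch, hchne, hchfl, hchsum⟩ := ff.chunks
    have hlenchL : ch.length = L.length := by
      have := congrArg List.length hchsum
      simpa using this
    set g := L1.length with hgdef
    set ch1s := ch.take g with hch1def
    set ch2s := ch.drop g with hch2def
    have hch_split : ch1s ++ ch2s = ch := List.take_append_drop g ch
    have hgle : g ≤ ch.length := by
      rw [hlenchL, ← hsplit, List.length_append]
      omega
    have e1 : ch1s.map List.sum = L1.map Finset.card ∧ ch2s.map List.sum = L2.map Finset.card := by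
      have h2 : ch1s.map List.sum ++ ch2s.map List.sum =
          L1.map Finset.card ++ L2.map Finset.card := by
        rw [← List.map_append, hch_split, hchsum, ← hsplit, List.map_append]
      exact List.append_inj h2 (by
        rw [List.length_map, List.length_map, hch1def, List.length_take]
        omega)
    set u := ch1s.flatten.length with hudef
    set t1 := t.take u with ht1def
    set t2 := t.drop u with ht2def
    have ht_split : t1 ++ t2 = t := List.take_append_drop u t
    have hule : u ≤ t.length := by
      have h3 : ch1s.flatten ++ ch2s.flatten = t.map (· - 1) := by
        rw [← List.flatten_append, hch_split, hchfl]
      have := congrArg List.length h3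
      rw [List.length_append, List.length_map] at this
      omega
    have e2 : ch1s.flatten = t1.map (· - 1) ∧ ch2s.flatten = t2.map (· - 1) := by
      have h3 : ch1s.flatten ++ ch2s.flatten = t1.map (· - 1) ++ t2.map (· - 1) := by
        rw [← List.flatten_append, hch_split, hchfl, ← List.map_append, ht_split]
      exact List.append_inj h3 (by
        rw [List.length_map, ht1def, List.length_take]
        omega)
    have hdisj1 : L1.Pairwise (fun B C => Disjoint B C) :=
      ff.disj.sublist (List.takeWhile_sublist pb)
    have hcard1 : (L1.map Finset.card).sum = m1 - 1 := by
      rw [sum_cards_of_disjoint hdisj1]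
      have h4 : L1.foldr (· ∪ ·) ∅ = Finset.Icc (o + 1) (o + m1 - 1) := by
        ext x
        rw [foldr_union_mem, hcov1 x, Finset.mem_Icc]
        omega
      rw [h4, Nat.card_Icc]
      omega
    have ht1pos : ∀ x ∈ t1, 2 ≤ x := fun x hx =>
      ff.hs x (by rw [← ht_split]; exact List.mem_append.mpr (Or.inl hx))
    have ht2pos : ∀ x ∈ t2, 2 ≤ x := fun x hx =>
      ff.hs x (by rw [← ht_split]; exact List.mem_append.mpr (Or.inr hx))
    have ht1sum : (t1.map (· - 1)).sum = m1 - 1 := by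
      rw [← e2.1, List.sum_flatten, e1.1, hcard1]
    have ht1stat := map_sub_sum (l := t1) (fun x hx => by have := ht1pos x hx; omega)
    have fam1 : Fam t1 o L1 := by
      refine ⟨ht1pos, ?_, fun B hB => ff.nonem B (hL1mem B hB), hdisj1,
        ff.sorted.sublist (List.takeWhile_sublist pb), ?_, ?_⟩
      · intro x
        rw [hcov1 x]
        rw [ht1sum] at ht1stat
        omega
      · intro B hB C hC x y z w h1 h2 h3 h4 h5 h6 h7
        exact ff.nc B (hL1mem B hB) C (hL1mem C hC) x y z w h1 h2 h3 h4 h5 h6 h7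
      · exact ⟨ch1s, fun c hc => hchne c ((List.take_sublist g ch).mem hc), e2.1, e1.1⟩
    obtain ⟨c1, ⟨hc1sig, hc1bl⟩, hc1uniq⟩ := treeIH t1
      (le_trans (by rw [ht1def, List.length_take]; omega) htN) o L1 fam1
    have hc1leaves : leaves c1 = m1 := by
      have h5 := leaves_sig c1
      rw [hc1sig] at h5
      rw [ht1sum] at ht1stat
      omega
    have ff2 : FamF ms' t2 (o + m1) L2 := by
      refine ⟨ht2pos, fun m hm => ff.hm m (by simp [hm]), ?_,
        fun B hB => ff.nonem B (hL2mem B hB),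
        ff.disj.sublist (List.dropWhile_sublist pb),
        ff.sorted.sublist (List.dropWhile_sublist pb), ?_, ?_, ?_⟩
      · intro x
        constructor
        · rintro ⟨B, hB, hx⟩
          have h1 := (ff.union x).mp ⟨B, hL2mem B hB, hx⟩
          have h2 := hL2 B hB x hx
          rw [List.sum_cons] at h1
          refine ⟨by omega, by omega, ?_⟩
          intro hmem
          exact h1.2.2 (by rw [offsN]; exact List.mem_cons.mpr (Or.inr hmem))
        · rintro ⟨h1, h2, h3⟩
          have hnot : x ∉ offsN o (m1 :: ms') := by
            rw [offsN]
            intro hmem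
            rcases List.mem_cons.mp hmem with rfl | h4
            · omega
            · exact h3 h4
          obtain ⟨B, hB, hx⟩ := (ff.union x).mpr ⟨by omega, by rw [List.sum_cons]; omega, hnot⟩
          rw [← hsplit] at hB
          rcases List.mem_append.mp hB with h | h
          · exfalso
            have := hL1 B h x hx
            have hx2 : x ∈ offsN (o + m1) ms' ∨ True := Or.inr trivial
            omega
          · exact ⟨B, h, hx⟩
      · intro B hB C hC x y z w h1 h2 h3 h4 h5 h6 h7
        exact ff.nc B (hL2mem B hB) C (hL2mem C hC) x y z w h1 h2 h3 h4 h5 h6 h7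
      · intro B hB b hb
        exact ff.nostrad B (hL2mem B hB) b (by rw [offsN]; exact List.mem_cons.mpr (Or.inr hb))
      · exact ⟨ch2s, fun c hc => hchne c ((List.drop_sublist g ch).mem hc), e2.2, e1.2⟩
    obtain ⟨ts', ⟨hts'sig, hts'bl, hts'ms⟩, hts'uniq⟩ := ih t2
      (le_trans (by rw [ht2def, List.length_drop]; omega) htN) (o + m1) L2 ff2
    refine ⟨c1 :: ts', ⟨?_, ?_, ?_⟩, ?_⟩
    · rw [sigF_cons, hc1sig, hts'sig, ht_split]
    · rw [blocksF_cons, hc1bl, hc1leaves, hts'bl, hsplit]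
    · rw [List.map_cons, hc1leaves, hts'ms]
    · rintro ts'' ⟨h1, h2, h3⟩
      cases ts'' with
      | nil => simp at h3
      | cons c'' rest'' =>
        rw [List.map_cons] at h3
        injection h3 with h3a h3b
        rw [sigF_cons] at h1
        rw [blocksF_cons] at h2
        have hposall : ∀ x ∈ signature c'' ++ sigF rest'', 2 ≤ x := by
          rw [h1]; exact ff.hs
        have hgc'' : Good c'' := master c''
          (fun x hx => hposall x (List.mem_append.mpr (Or.inl hx)))
        have hgrest : ∀ t' ∈ rest'', Good t' := fun t' ht' => master t'
          (fun x hx => hposall x (List.mem_append.mpr (Or.inr (mem_sigF ht' hx))))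
        rw [h3a] at h2
        have hsplit2 : blocksB c'' o = L1 ∧ blocksF rest'' (o + m1) = L2 := by
          refine append_eq_append_of_pred (p := fun B => ∀ x ∈ B, x + 1 ≤ o + m1)
            (h2.trans hsplit.symm) ?_ ?_ ?_ ?_
          · intro B hB x hx
            have := (hgc'' o).block_sub B hB x hx
            rw [h3a] at this
            omega
          · intro B hB hforall
            obtain ⟨x, hx⟩ := blocksF_nonem hgrest (o + m1) B hB
            have h5 := blocksF_sub hgrest (o + m1) B hB x hx
            have := hforall x hx
            omega
          · exact fun B hB x hx => (hL1 B hB x hx).2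
          · intro B hB hforall
            obtain ⟨x, hx⟩ := ff.nonem B (hL2mem B hB)
            have := hL2 B hB x hx
            have := hforall x hx
            omega
        have hsig'' : signature c'' = t1 ∧ sigF rest'' = t2 := by
          refine prefix_eq_of_sum_map (h1.trans ht_split.symm) (by rw [h1]; exact ff.hs) ?_
          have e3 := leaves_sig c''
          have e4 := map_sub_sum (l := signature c'')
            (fun x hx => by have := hposall x (List.mem_append.mpr (Or.inl hx)); omega)
          rw [ht1sum]
          have e5 : leaves c'' = m1 := h3a
          omega
        have hc''eq : c'' = c1 := hc1uniq c'' ⟨hsig''.1, hsplit2.1⟩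
        have hrest : rest'' = ts' := hts'uniq rest'' ⟨hsig''.2, hsplit2.2, h3b⟩
        rw [hc''eq, hrest]

theorem map_leaves_sum (ts : List PTree) : (ts.map leaves).sum = leavesF ts := by
  induction ts with
  | nil => rfl
  | cons a as ih => rw [List.map_cons, List.sum_cons, leavesF, ih]

theorem tree_base (o : ℕ) (L : List (Finset ℕ)) (fam : Fam [] o L) :
    ∃! T : PTree, signature T = [] ∧ blocksB T o = L := by
  have hL : L = [] := by
    rw [List.eq_nil_iff_forall_not_mem]
    intro B hB
    obtain ⟨x, hx⟩ := fam.nonem B hB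
    have h := (fam.union x).mp ⟨B, hB, hx⟩
    simp at h
    omega
  subst hL
  refine ⟨node [], ⟨by rw [signature_node], blocksB_leaf o⟩, ?_⟩
  rintro T ⟨h1, _⟩
  obtain ⟨cs⟩ := T
  cases cs with
  | nil => rfl
  | cons c cs' => rw [signature_node] at h1; simp at h1

theorem tree_exists_unique : ∀ (N : ℕ) (s : List ℕ), s.length ≤ N →
    ∀ (o : ℕ) (L : List (Finset ℕ)), Fam s o L →
    ∃! T : PTree, signature T = s ∧ blocksB T o = L := by
  intro N
  induction N with
  | zero =>
    intro s hsN o L fam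
    rw [Nat.le_zero, List.length_eq_zero_iff] at hsN
    subst hsN
    exact tree_base o L fam
  | succ N ihN =>
    intro s hsN o L fam
    match s with
    | [] => exact tree_base o L fam
    | k :: t =>
    have hk : 2 ≤ k := fam.hs k (by simp)
    have htpos : ∀ x ∈ t, 2 ≤ x := fun x hx => fam.hs x (by simp [hx])
    have htN : t.length ≤ N := by
      rw [List.length_cons] at hsN; omega
    have hmss := map_sub_sum (l := t) (fun x hx => by have := htpos x hx; omega)
    set E := (t.map (· - 1)).sum with hE
    set n := (k - 1) + E with hn
    have hunion : ∀ x : ℕ, (∃ B ∈ L, x ∈ B) ↔ (o + 1 ≤ x ∧ x ≤ o + n) := by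
      intro x
      rw [fam.union x]
      simp only [List.length_cons, List.sum_cons]
      omega
    rcases L with _ | ⟨B1, L'⟩
    · exfalso
      obtain ⟨B, hB, _⟩ := (hunion (o + 1)).mpr ⟨le_refl _, by omega⟩
      simp at hB
    have hoB1 : o + 1 ∈ B1 := by
      refine mem_head_of_min fam.sorted ?_ ((hunion (o + 1)).mpr ⟨le_refl _, by omega⟩)
      intro x hx
      exact ((hunion x).mp ⟨B1, by simp, hx⟩).1
    have hL'mem : ∀ B ∈ L', B ∈ B1 :: L' := fun B hB => by simp [hB]
    have hdisjB1 : ∀ B ∈ L', Disjoint B1 B := (List.pairwise_cons.mp fam.disj).1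
    have hB1sub : ∀ x ∈ B1, o + 1 ≤ x ∧ x ≤ o + n := fun x hx =>
      (hunion x).mp ⟨B1, by simp, hx⟩
    have hL'sub : ∀ B ∈ L', ∀ x ∈ B, o + 2 ≤ x ∧ x ≤ o + n := by
      intro B hB x hx
      have h1 := (hunion x).mp ⟨B, hL'mem B hB, hx⟩
      have h2 : x ≠ o + 1 := by
        rintro rfl
        exact (Finset.disjoint_left.mp (hdisjB1 B hB) hoB1) hx
      omega
    obtain ⟨ch, hchne, hchfl, hchsum⟩ := fam.chunks
    rcases ch with _ | ⟨ch1, ch''⟩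
    · exfalso; simp at hchsum
    obtain ⟨h1c, ch1', rfl⟩ : ∃ a l, ch1 = a :: l := by
      cases ch1 with
      | nil => exact absurd rfl (hchne [] (by simp))
      | cons a l => exact ⟨a, l, rfl⟩
    have hflat : (h1c :: ch1') ++ ch''.flatten = (k - 1) :: t.map (· - 1) := by
      simpa using hchfl
    rw [List.cons_append] at hflat
    injection hflat with hh1c hflat2
    subst hh1c
    have hsum1 : (k - 1) + ch1'.sum = B1.card ∧ ch''.map List.sum = L'.map Finset.card := by
      simp only [List.map_cons, List.sum_cons] at hchsum
      exact List.cons_eq_cons.mp hchsum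
    have hch1'pos : ∀ x ∈ ch1', 1 ≤ x := by
      intro x hx
      have hx2 : x ∈ t.map (· - 1) := by
        rw [← hflat2]; exact List.mem_append.mpr (Or.inl hx)
      obtain ⟨y, hy, rfl⟩ := List.mem_map.mp hx2
      have := htpos y hy; omega
    set lst := B1.sort (· ≤ ·) with hlst
    set j := ch1'.sum with hj
    have hcard : B1.card = (k - 1) + j := hsum1.1.symm
    have hlstlen : lst.length = (k - 1) + j := by
      rw [hlst, Finset.length_sort, hcard]
    set hd := lst.take j with hhd
    set Al := lst.drop j with hAldef
    have hhdAl : hd ++ Al = lst := List.take_append_drop j lst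
    have hAllen : Al.length = k - 1 := by
      rw [hAldef, List.length_drop, hlstlen]; omega
    have hlstnodup : lst.Nodup := B1.sort_nodup _
    have hlstsorted : lst.Pairwise (· < ·) := B1.sortedLT_sort.pairwise
    have hmemlst : ∀ x, x ∈ lst ↔ x ∈ B1 := fun x => Finset.mem_sort _
    have hcross : ∀ x ∈ hd, ∀ y ∈ Al, x < y := by
      have h2 : (hd ++ Al).Pairwise (· < ·) := by rw [hhdAl]; exact hlstsorted
      exact (List.pairwise_append.mp h2).2.2
    have hhd_nodup : hd.Nodup := hlstnodup.sublist (List.take_sublist j lst)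
    have hAl_nodup : Al.Nodup := hlstnodup.sublist (List.drop_sublist j lst)
    have hAl_sorted : Al.Pairwise (· < ·) := hlstsorted.sublist (List.drop_sublist j lst)
    have hhdlen : hd.length = j := by rw [hhd, List.length_take, hlstlen]; omega
    set HP := hd.toFinset with hHP
    set A := Al.toFinset with hAf
    have hB1eq : B1 = HP ∪ A := by
      ext x
      rw [Finset.mem_union, hHP, hAf, List.mem_toFinset, List.mem_toFinset,
        ← List.mem_append, hhdAl, hmemlst]
    have hHPcard : HP.card = j := by
      rw [hHP, List.toFinset_card_of_nodup hhd_nodup, hhdlen]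
    have hAcard : A.card = k - 1 := by
      rw [hAf, List.toFinset_card_of_nodup hAl_nodup, hAllen]
    have hAlmemB1 : ∀ b ∈ Al, b ∈ B1 := by
      intro b hb
      rw [← hmemlst, ← hhdAl]
      exact List.mem_append.mpr (Or.inr hb)
    have hhdmemB1 : ∀ b ∈ hd, b ∈ B1 := by
      intro b hb
      rw [← hmemlst, ← hhdAl]
      exact List.mem_append.mpr (Or.inl hb)
    have hAlne : Al ≠ [] := by
      intro h
      have := congrArg List.length h
      rw [hAllen] at this
      simp at this
      omega
    obtain ⟨a2, Alt, hAleq⟩ := List.exists_cons_of_ne_nil hAlne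
    have ha2le : ∀ b ∈ Al, a2 ≤ b := by
      intro b hb
      rw [hAleq] at hb
      rcases List.mem_cons.mp hb with rfl | h2
      · exact le_refl _
      · have h3 : Al.Pairwise (· < ·) := hAl_sorted
        rw [hAleq] at h3
        have := (List.pairwise_cons.mp h3).1 b h2
        omega
    have ha2mem : a2 ∈ Al := by rw [hAleq]; simp
    -- key: o+1 location
    have hHPo1 : j ≠ 0 → o + 1 ∈ HP := by
      intro hj0
      rw [hB1eq] at hoB1
      rcases Finset.mem_union.mp hoB1 with h | h
      · exact h
      · exfalso
        rw [hAf, List.mem_toFinset] at h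
        have hle := ha2le _ h
        obtain ⟨b0, hb0⟩ : ∃ b0, b0 ∈ hd := by
          have hhdne : hd ≠ [] := by
            intro hh
            rw [hh] at hhdlen
            simp at hhdlen
            omega
          obtain ⟨b0, l0, hh⟩ := List.exists_cons_of_ne_nil hhdne
          exact ⟨b0, by rw [hh]; exact List.mem_cons_self⟩
        have h1 := hcross b0 hb0 a2 ha2mem
        have h2 := (hB1sub b0 (hhdmemB1 b0 hb0)).1
        omega
    have hA_o1 : j = 0 → a2 = o + 1 := by
      intro hj0
      rw [hB1eq] at hoB1
      have hHPe : HP = ∅ := by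
        rw [hHP, hhd, hj0]
        simp
      rw [hHPe] at hoB1
      simp at hoB1
      rw [hAf, List.mem_toFinset] at hoB1
      have h1 := ha2le _ hoB1
      have h2 := (hB1sub a2 (hAlmemB1 a2 ha2mem)).1
      omega
    -- chain for msOf
    have hAlchain : List.Chain (· < ·) o Al := by
      rw [List.Chain, List.isChain_iff_pairwise]
      rw [List.pairwise_cons]
      refine ⟨fun b hb => by have := (hB1sub b (hAlmemB1 b hb)).1; omega, hAl_sorted⟩
    have hAltop : ∀ b ∈ Al, b < o + n + 1 := fun b hb => by
      have := (hB1sub b (hAlmemB1 b hb)).2; omega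
    obtain ⟨hmsoffs, hmssum, hmspos⟩ := msOf_facts hAlchain hAltop (by omega)
    set ms := msOf o Al (o + n + 1) with hms
    have hmslen : ms.length = k := by
      rw [hms, msOf_length, hAllen]; omega
    -- L'' and chunk witness
    set L'' := (if j = 0 then ([] : List (Finset ℕ)) else [HP]) ++ L' with hL''
    have hmemL'' : ∀ B, B ∈ L'' ↔ ((j ≠ 0 ∧ B = HP) ∨ B ∈ L') := by
      intro B
      by_cases hj0 : j = 0 <;> simp [hL'', hj0]
    have hch1'nil : j = 0 → ch1' = [] := by
      intro hj0
      cases hc : ch1' with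
      | nil => rfl
      | cons a l =>
        exfalso
        have ha := hch1'pos a (by rw [hc]; simp)
        have : ch1'.sum = a + l.sum := by rw [hc]; simp
        omega
    have hHPsub : ∀ x ∈ HP, o + 1 ≤ x ∧ x < a2 := by
      intro x hx
      rw [hHP, List.mem_toFinset] at hx
      exact ⟨(hB1sub x (hhdmemB1 x hx)).1, hcross x hx a2 ha2mem⟩
    have hAmem2 : ∀ x, x ∈ A ↔ x ∈ Al := fun x => List.mem_toFinset
    have ff2 : FamF ms t o L'' := by
      refine ⟨htpos, hmspos, ?_, ?_, ?_, ?_, ?_, ?_, ?_⟩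
      · -- union
        intro x
        rw [hmssum, hmsoffs]
        constructor
        · rintro ⟨B, hB, hx⟩
          rcases (hmemL'' B).mp hB with ⟨hj0, rfl⟩ | hB'
          · have h1 := hHPsub x hx
            have h2 := hB1sub x (by rw [hB1eq]; exact Finset.mem_union_left _ hx)
            refine ⟨by omega, by omega, ?_⟩
            intro hmem
            rcases List.mem_cons.mp hmem with rfl | h3
            · omega
            · have := ha2le x h3; omega
          · have h1 := hL'sub B hB' x hx
            refine ⟨by omega, by omega, ?_⟩
            intro hmem
            rcases List.mem_cons.mp hmem with rfl | h3
            · omega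
            · have h4 : x ∈ B1 := hAlmemB1 x h3
              exact (Finset.disjoint_left.mp (hdisjB1 B hB') h4) hx
        · rintro ⟨h1, h2, h3⟩
          have hxo : x ≠ o := fun h => h3 (h ▸ List.mem_cons_self)
          have hxAl : x ∉ Al := fun h => h3 (List.mem_cons.mpr (Or.inr h))
          obtain ⟨B, hB, hx⟩ := (hunion x).mpr ⟨by omega, by omega⟩
          rcases List.mem_cons.mp hB with rfl | hB'
          · rw [hB1eq] at hx
            rcases Finset.mem_union.mp hx with h4 | h4
            · have hj0 : j ≠ 0 := by
                intro hj0
                rw [hHP, hhd, hj0] at h4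
                simp at h4
              exact ⟨HP, (hmemL'' HP).mpr (Or.inl ⟨hj0, rfl⟩), h4⟩
            · exact absurd ((hAmem2 x).mp h4) hxAl
          · exact ⟨B, (hmemL'' B).mpr (Or.inr hB'), hx⟩
      · -- nonem
        intro B hB
        rcases (hmemL'' B).mp hB with ⟨hj0, rfl⟩ | hB'
        · rw [← Finset.card_pos, hHPcard]; omega
        · exact fam.nonem B (hL'mem B hB')
      · -- disj
        by_cases hj0 : j = 0
        · have : L'' = L' := by rw [hL'', hj0]; simp
          rw [this]
          exact (List.pairwise_cons.mp fam.disj).2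
        · have : L'' = HP :: L' := by rw [hL'', if_neg hj0]; simp
          rw [this]
          refine List.pairwise_cons.mpr ⟨?_, (List.pairwise_cons.mp fam.disj).2⟩
          intro C hC
          exact Finset.disjoint_of_subset_left (by rw [hB1eq]; exact Finset.subset_union_left)
            (hdisjB1 C hC)
      · -- sorted
        by_cases hj0 : j = 0
        · have : L'' = L' := by rw [hL'', hj0]; simp
          rw [this]
          exact (List.pairwise_cons.mp fam.sorted).2
        · have : L'' = HP :: L' := by rw [hL'', if_neg hj0]; simp
          rw [this]
          refine List.pairwise_cons.mpr ⟨?_, (List.pairwise_cons.mp fam.sorted).2⟩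
          intro C hC
          refine min_lt_min_of (hHPo1 hj0) ?_
          intro y hy
          have := hL'sub C hC y hy
          omega
      · -- nc
        intro B hB C hC x y z w h1 h2 h3 h4 h5 h6 h7
        rcases (hmemL'' B).mp hB with ⟨hj0B, rfl⟩ | hB' <;>
          rcases (hmemL'' C).mp hC with ⟨hj0C, rfl⟩ | hC'
        · rfl
        · exfalso
          have hxB1 : x ∈ B1 := by rw [hB1eq]; exact Finset.mem_union_left _ h4
          have hzB1 : z ∈ B1 := by rw [hB1eq]; exact Finset.mem_union_left _ h5
          have heq := fam.nc B1 (by simp) C (hL'mem C hC') x y z w h1 h2 h3 hxB1 hzB1 h6 h7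
          have hxC : x ∈ C := heq ▸ hxB1
          exact (Finset.disjoint_left.mp (hdisjB1 C hC') hxB1) hxC
        · exfalso
          have hyB1 : y ∈ B1 := by rw [hB1eq]; exact Finset.mem_union_left _ h6
          have hwB1 : w ∈ B1 := by rw [hB1eq]; exact Finset.mem_union_left _ h7
          have heq := fam.nc B (hL'mem B hB') B1 (by simp) x y z w h1 h2 h3 h4 h5 hyB1 hwB1
          have hxB1 : x ∈ B1 := by rw [← heq]; exact h4
          exact (Finset.disjoint_left.mp (hdisjB1 B hB') hxB1) h4
        · exact fam.nc B (hL'mem B hB') C (hL'mem C hC') x y z w h1 h2 h3 h4 h5 h6 h7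
      · -- nostrad
        intro B hB b hb
        rw [hmsoffs] at hb
        rcases List.mem_cons.mp hb with rfl | hbAl
        · right
          intro x hx
          rcases (hmemL'' B).mp hB with ⟨hj0, rfl⟩ | hB'
          · have := hHPsub x hx; omega
          · have := hL'sub B hB' x hx; omega
        · rcases (hmemL'' B).mp hB with ⟨hj0, rfl⟩ | hB'
          · left
            intro x hx
            rw [hHP, List.mem_toFinset] at hx
            exact hcross x hx b hbAl
          · have hbB1 : b ∈ B1 := hAlmemB1 b hbAl
            by_cases hall : ∀ x ∈ B, x < b
            · exact Or.inl hall
            · right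
              push_neg at hall
              obtain ⟨v, hv, hbv⟩ := hall
              have hvb : b < v := by
                rcases Nat.lt_or_ge b v with h | h
                · exact h
                · exfalso
                  have : v = b := by omega
                  subst this
                  exact (Finset.disjoint_left.mp (hdisjB1 B hB') hbB1) hv
              intro x hx
              by_contra hxb
              push_neg at hxb
              have hxb2 : x < b := by
                rcases Nat.lt_or_ge x b with h | h
                · exact h
                · exfalso
                  have : x = b := by omega
                  subst this
                  exact (Finset.disjoint_left.mp (hdisjB1 B hB') hbB1) hx
              have hox : o + 1 < x := by
                have h1 := hL'sub B hB' x hx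
                omega
              have heq := fam.nc B1 (by simp) B (hL'mem B hB') (o + 1) x b v hox hxb2 hvb
                hoB1 hbB1 hx hv
              have hxB1 : x ∈ B1 := by rw [heq]; exact hx
              exact (Finset.disjoint_left.mp (hdisjB1 B hB') hxB1) hx
      · -- chunks
        refine ⟨(if j = 0 then [] else [ch1']) ++ ch'', ?_, ?_, ?_⟩
        · intro c hc
          rcases List.mem_append.mp hc with h | h
          · by_cases hj0 : j = 0
            · rw [if_pos hj0] at h; simp at h
            · rw [if_neg hj0] at h
              simp at h
              subst h
              intro hnil
              rw [hnil] at hj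
              simp at hj
              exact hj0 hj
          · exact hchne c (by simp [h])
        · rw [List.flatten_append]
          by_cases hj0 : j = 0
          · rw [if_pos hj0]
            rw [hch1'nil hj0] at hflat2
            simpa using hflat2
          · rw [if_neg hj0]
            simpa using hflat2
        · rw [List.map_append, List.map_append]
          by_cases hj0 : j = 0
          · rw [if_pos hj0, if_pos hj0]
            simpa using hsum1.2
          · rw [if_neg hj0, if_neg hj0]
            simp only [List.map_cons, List.map_nil]
            rw [hsum1.2, hHPcard]
    obtain ⟨ts, ⟨htssig, htsbl, htsms⟩, htsuniq⟩ := forest_step N ihN ms t htN o L'' ff2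
    obtain ⟨c1, cs, rfl⟩ : ∃ c1 cs, ts = c1 :: cs := by
      cases ts with
      | nil =>
        exfalso
        have h2 := congrArg List.length htsms
        rw [hmslen] at h2
        simp at h2
        omega
      | cons a l => exact ⟨a, l, rfl⟩
    have htslen : cs.length + 1 = k := by
      have h2 := congrArg List.length htsms
      rw [hmslen] at h2
      simp at h2
      omega
    have hgood_ts : ∀ t' ∈ c1 :: cs, Good t' := by
      intro t' ht'
      refine master t' ?_
      intro x hx
      exact htpos x (by rw [← htssig]; exact mem_sigF ht' hx)
    have hoffs_ts : offs (o + leaves c1) cs = Al := by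
      have h1 : offs o (c1 :: cs) = offsN o ms := by
        rw [offs_eq_offsN, htsms]
      rw [hmsoffs, offs] at h1
      exact (List.cons_eq_cons.mp h1).2
    have hmseq : ms = (a2 - o) :: msOf a2 Alt (o + n + 1) := by
      rw [hms, hAleq, msOf]
    have hlv : leaves c1 = a2 - o := by
      have h2 := htsms
      rw [List.map_cons, hmseq] at h2
      exact (List.cons_eq_cons.mp h2).1
    have hblocks_node : blocksB (node (c1 :: cs)) o = B1 :: L' := by
      rw [blocksB_node, hoffs_ts]
      rw [blocksF_cons] at htsbl
      by_cases hj0 : j = 0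
      · have hL''eq : L'' = L' := by rw [hL'', hj0]; simp
        have hHPe : HP = ∅ := by rw [hHP, hhd, hj0]; simp
        have hlv1 : leaves c1 = 1 := by rw [hlv, hA_o1 hj0]; omega
        have hbc1 : blocksB c1 o = [] := by
          rw [List.eq_nil_iff_forall_not_mem]
          intro B hB
          obtain ⟨x, hx⟩ := (hgood_ts c1 (by simp) o).nonem B hB
          have h2 := (hgood_ts c1 (by simp) o).block_sub B hB x hx
          rw [hlv1] at h2
          omega
        rw [hbc1] at htsbl ⊢
        rw [List.nil_append] at htsbl
        rw [htsbl, hL''eq]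
        simp only [List.tail_nil, List.nil_append]
        congr 1
        show A ∪ (∅ : Finset ℕ) = B1
        rw [hB1eq, hHPe]
        simp
      · have hL''eq : L'' = HP :: L' := by rw [hL'', if_neg hj0]; simp
        rw [hL''eq] at htsbl
        rcases tree_shape c1 o with ⟨hb0, _, _⟩ | ⟨hbS, _⟩
        · exfalso
          rw [hb0, List.nil_append] at htsbl
          have hHPmem : HP ∈ blocksF cs (o + leaves c1) := by rw [htsbl]; simp
          have h2 := blocksF_sub (fun t' ht' => hgood_ts t' (by simp [ht'])) (o + leaves c1)
            HP hHPmem (o + 1) (hHPo1 hj0)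
          have := leaves_pos c1
          omega
        · rw [hbS, List.cons_append] at htsbl
          obtain ⟨e1, e2⟩ := List.cons_eq_cons.mp htsbl
          rw [e1, e2]
          congr 1
          rw [hB1eq]
          exact Finset.union_comm _ _
    have hsig_node : signature (node (c1 :: cs)) = k :: t := by
      rw [signature_node]
      show (cs.length + 1) :: (signature c1 ++ sigF cs) = k :: t
      rw [htslen, ← sigF_cons, htssig]
    refine ⟨node (c1 :: cs), ⟨hsig_node, hblocks_node⟩, ?_⟩
    rintro T' ⟨hsigT', hblT'⟩
    obtain ⟨cs'⟩ := T'
    rcases cs' with _ | ⟨c'', rest⟩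
    · rw [signature_node] at hsigT'; simp at hsigT'
    · have hsigT0 := hsigT'
      rw [signature_node] at hsigT'
      have hsigT'' : (rest.length + 1) :: (signature c'' ++ sigF rest) = k :: t := hsigT'
      obtain ⟨hk', hsig2⟩ := List.cons_eq_cons.mp hsigT''
      rw [blocksB_node] at hblT'
      obtain ⟨hHB1, htl⟩ := List.cons_eq_cons.mp hblT'
      have hgood' : ∀ t' ∈ c'' :: rest, Good t' := by
        intro t' ht'
        refine master t' ?_
        intro x hx
        refine htpos x ?_
        rw [← hsig2]
        rcases List.mem_cons.mp ht' with rfl | h2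
        · exact List.mem_append.mpr (Or.inl hx)
        · exact List.mem_append.mpr (Or.inr (mem_sigF h2 hx))
      set A2l := offs (o + leaves c'') rest with hA2ldef
      set Hc2 := (blocksB c'' o).headI with hHc2
      have hHc2sub : ∀ x ∈ Hc2, x + 1 ≤ o + leaves c'' := by
        rcases tree_shape c'' o with ⟨hb0, _, _⟩ | ⟨hbS, _⟩
        · intro x hx
          rw [hHc2, hb0] at hx
          exact absurd hx (Finset.notMem_empty x)
        · intro x hx
          exact ((hgood' c'' (by simp) o).block_sub Hc2
            (by rw [hbS]; exact List.mem_cons_self) x hx).2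
      have hA2lsub : ∀ b ∈ A2l, o + leaves c'' ≤ b := fun b hb => (offs_mem_bounds hb).1
      have hA2lnodup : A2l.Nodup := offs_nodup _ _
      have hA2lsorted : A2l.Pairwise (· < ·) := offs_sorted _ _
      have hA2llen : A2l.length = rest.length := offs_length _ _
      have hs1 : B1.sort (· ≤ ·) = HP.sort (· ≤ ·) ++ A.sort (· ≤ ·) := by
        rw [hB1eq]
        refine sort_union_of_lt ?_
        intro x hx y hy
        rw [hHP, List.mem_toFinset] at hx
        rw [hAf, List.mem_toFinset] at hy
        exact hcross x hx y hy
      have hs2 : B1.sort (· ≤ ·) = Hc2.sort (· ≤ ·) ++ A2l.toFinset.sort (· ≤ ·) := by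
        rw [← hHB1, Finset.union_comm]
        refine sort_union_of_lt ?_
        intro x hx y hy
        rw [List.mem_toFinset] at hy
        have h1 := hHc2sub x hx
        have h2 := hA2lsub y hy
        omega
      have hlen2 : (A.sort (· ≤ ·)).length = (A2l.toFinset.sort (· ≤ ·)).length := by
        rw [Finset.length_sort, Finset.length_sort, hAcard,
          List.toFinset_card_of_nodup hA2lnodup, hA2llen]
        omega
      obtain ⟨hXeq, hYeq⟩ := List.append_inj' (hs1.symm.trans hs2) hlen2
      have hHPeq : Hc2 = HP := by
        have h2 := congrArg List.toFinset hXeq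
        rw [Finset.sort_toFinset, Finset.sort_toFinset] at h2
        exact h2.symm
      have hAeq : A2l.toFinset = A := by
        have h2 := congrArg List.toFinset hYeq
        rw [Finset.sort_toFinset, Finset.sort_toFinset] at h2
        exact h2.symm
      have hA2lAl : A2l = Al := by
        haveI : Std.Antisymm (α := ℕ) (· < ·) := ⟨fun a b h1 h2 => absurd h2 (lt_asymm h1)⟩
        refine List.Perm.eq_of_pairwise' hA2lsorted hAl_sorted ?_
        refine List.perm_of_nodup_nodup_toFinset_eq hA2lnodup hAl_nodup ?_
        rw [hAeq, hAf]
      have hoffs2 : offs o (c'' :: rest) = offsN o ms := by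
        rw [offs, ← hA2ldef, hA2lAl, hmsoffs]
      have hmapleaves : (c'' :: rest).map leaves = ms := by
        refine offsN_inj (o := o) ?_ ?_
        · rw [← offs_eq_offsN, hoffs2]
        · rw [map_leaves_sum, hmssum]
          have h5 := leaves_sig (node (c'' :: rest))
          rw [hsigT0] at h5
          simp only [List.length_cons, List.sum_cons] at h5
          have h6 : leaves (node (c'' :: rest)) = leavesF (c'' :: rest) := by
            rw [leaves_internal, leavesF]
          omega
      have hblF : blocksF (c'' :: rest) o = L'' := by
        rw [blocksF_cons]
        by_cases hj0 : j = 0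
        · have hL''eq : L'' = L' := by rw [hL'', hj0]; simp
          have hHPe : HP = ∅ := by rw [hHP, hhd, hj0]; simp
          have hbc'' : blocksB c'' o = [] := by
            rcases tree_shape c'' o with ⟨hb0, _, _⟩ | ⟨hbS, _⟩
            · exact hb0
            · exfalso
              have hhm := (hgood' c'' (by simp) o).headm Hc2 (by rw [hbS]; rfl)
              rw [hHPeq, hHPe] at hhm
              exact absurd hhm (Finset.notMem_empty _)
          rw [hbc''] at htl ⊢
          rw [List.tail_nil, List.nil_append] at htl
          rw [List.nil_append, htl, hL''eq]
        · have hL''eq : L'' = HP :: L' := by rw [hL'', if_neg hj0]; simp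
          have hne : blocksB c'' o ≠ [] := by
            intro hb0
            have h7 : Hc2 = ∅ := by rw [hHc2, hb0]; rfl
            rw [hHPeq] at h7
            have h8 := hHPcard
            rw [h7] at h8
            simp at h8
            exact hj0 h8.symm
          rcases tree_shape c'' o with ⟨hb0, _, _⟩ | ⟨hbS, _⟩
          · exact absurd hb0 hne
          · have hhead : (blocksB c'' o).headI = HP := by rw [← hHc2, hHPeq]
            rw [hbS, List.cons_append, hhead, htl, hL''eq]
      have h9 := htsuniq (c'' :: rest) ⟨by rw [sigF_cons]; exact hsig2, hblF, hmapleaves⟩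
      rw [h9]
theorem blocks_nodup (T : PTree) (hT : ∀ x ∈ signature T, 2 ≤ x) (o : ℕ) :
    (blocksB T o).Nodup := by
  have g := master T hT o
  have h2 : (blocksB T o).Pairwise (fun B C => B ≠ C) := by
    refine List.Pairwise.imp_of_mem ?_ g.disj
    intro B C hB hC hdisj
    intro heq
    subst heq
    obtain ⟨x, hx⟩ := g.nonem B hB
    exact absurd hx (Finset.disjoint_left.mp hdisj hx)
  exact h2


end PTree

/-- A finite partition is noncrossing if there are no `x < y < z < w` with `x, z` in one
block and `y, w` in a different block. -/
def Noncrossing {n : ℕ} (π : Finpartition (Finset.Icc 1 n)) : Prop :=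
  ¬ ∃ B₁ ∈ π.parts, ∃ B₂ ∈ π.parts, B₁ ≠ B₂ ∧
    ∃ x y z w : ℕ, x < y ∧ y < z ∧ z < w ∧ x ∈ B₁ ∧ z ∈ B₁ ∧ y ∈ B₂ ∧ w ∈ B₂

/-- `L` is the list of blocks of `π` ordered by increasing minima. -/
def SortedBlocks {n : ℕ} (π : Finpartition (Finset.Icc 1 n)) (L : List (Finset ℕ)) : Prop :=
  L.Nodup ∧ L.toFinset = π.parts ∧ L.Pairwise (fun B C => B.min < C.min)

/-- `sizes` is obtained from the composition `v` by summing adjacent entries,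
i.e. `v` refines `sizes`. -/
def Refines (v sizes : List ℕ) : Prop :=
  ∃ chunks : List (List ℕ), (∀ c ∈ chunks, c ≠ []) ∧ chunks.flatten = v ∧
    chunks.map List.sum = sizes




open PTree in
/-- The partition associated to an `s`-tree. -/
def PTree.mkPartition (s : List ℕ) (hs : ∀ x ∈ s, 2 ≤ x) (T : PTree) (hT : T.signature = s) :
    Finpartition (Finset.Icc 1 (s.sum - s.length)) where
  parts := (blocksB T 0).toFinset
  supIndep := by
    rw [Finset.supIndep_iff_pairwiseDisjoint]
    intro B hB C hC hne
    have hT2 : ∀ x ∈ signature T, 2 ≤ x := fun x hx => hs x (hT ▸ hx)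
    have g := master T hT2 0
    rw [Finset.mem_coe, List.mem_toFinset] at hB hC
    haveI : Std.Symm (fun B C : Finset ℕ => Disjoint B C) := ⟨fun _ _ h => h.symm⟩
    have := g.disj.forall hB hC hne
    exact this
  sup_parts := by
    have hT2 : ∀ x ∈ signature T, 2 ≤ x := fun x hx => hs x (hT ▸ hx)
    have g := master T hT2 0
    have hls := leaves_sig T
    rw [hT] at hls
    have hmss := map_sub_sum (l := s) (fun x hx => by have := hs x hx; omega)
    ext a
    rw [Finset.mem_sup, Finset.mem_Icc]
    have hu := g.union a
    constructor
    · rintro ⟨B, hB, haB⟩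
      rw [List.mem_toFinset] at hB
      have := hu.mp ⟨B, hB, haB⟩
      omega
    · intro h
      obtain ⟨B, hB, haB⟩ := hu.mpr ⟨by omega, by omega⟩
      exact ⟨B, List.mem_toFinset.mpr hB, haB⟩
  bot_notMem := by
    intro h
    have hT2 : ∀ x ∈ signature T, 2 ≤ x := fun x hx => hs x (hT ▸ hx)
    have g := master T hT2 0
    rw [List.mem_toFinset] at h
    obtain ⟨x, hx⟩ := g.nonem _ h
    exact absurd hx (Finset.notMem_empty x)

open PTree

/-- For every composition `s` with all entries at least 2, the set of `s`-trees is in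
bijection with the set of noncrossing `(s-𝟏)`-partitions of `[|s| - ℓ(s)]`. -/
theorem sTrees_equiv_noncrossingPartitions (s : List ℕ) (hs : ∀ x ∈ s, 2 ≤ x) :
    Nonempty ({T : PTree // T.signature = s} ≃
      {π : Finpartition (Finset.Icc 1 (s.sum - s.length)) // Noncrossing π ∧
        ∃ L : List (Finset ℕ), SortedBlocks π L ∧
          Refines (s.map (fun x => x - 1)) (L.map Finset.card)}) := by
  classical
  have hmss := map_sub_sum (l := s) (fun x hx => by have := hs x hx; omega)
  have hprops : ∀ (T : {T : PTree // T.signature = s}),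
      Noncrossing (PTree.mkPartition s hs T.1 T.2) ∧
      ∃ L : List (Finset ℕ), SortedBlocks (PTree.mkPartition s hs T.1 T.2) L ∧
        Refines (s.map (fun x => x - 1)) (L.map Finset.card) := by
    rintro ⟨T, hT⟩
    have hT2 : ∀ x ∈ signature T, 2 ≤ x := fun x hx => hs x (hT ▸ hx)
    have g := master T hT2 0
    constructor
    · rintro ⟨B, hB, C, hC, hne, x, y, z, w, h1, h2, h3, h4, h5, h6, h7⟩
      have hB' : B ∈ blocksB T 0 := by
        have : B ∈ (blocksB T 0).toFinset := hB
        rwa [List.mem_toFinset] at this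
      have hC' : C ∈ blocksB T 0 := by
        have : C ∈ (blocksB T 0).toFinset := hC
        rwa [List.mem_toFinset] at this
      exact hne (g.nc B hB' C hC' x y z w h1 h2 h3 h4 h5 h6 h7)
    · refine ⟨blocksB T 0, ⟨blocks_nodup T hT2 0, rfl, g.sorted⟩, ?_⟩
      exact ⟨chunksB T, chunksB_ne_nil T, by rw [chunksB_flatten, hT], g.cards⟩
  set F : {T : PTree // T.signature = s} →
      {π : Finpartition (Finset.Icc 1 (s.sum - s.length)) // Noncrossing π ∧
        ∃ L : List (Finset ℕ), SortedBlocks π L ∧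
          Refines (s.map (fun x => x - 1)) (L.map Finset.card)} :=
    fun T => ⟨PTree.mkPartition s hs T.1 T.2, hprops T⟩ with hF
  have hinj : Function.Injective F := by
    rintro ⟨T1, h1⟩ ⟨T2, h2⟩ heq
    have hparts : (blocksB T1 0).toFinset = (blocksB T2 0).toFinset := by
      have := congrArg (fun π => π.1.parts) heq
      exact this
    have h1' : ∀ x ∈ signature T1, 2 ≤ x := fun x hx => hs x (h1 ▸ hx)
    have h2' : ∀ x ∈ signature T2, 2 ≤ x := fun x hx => hs x (h2 ▸ hx)
    have hbl : blocksB T1 0 = blocksB T2 0 := by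
      haveI : Std.Antisymm (fun B C : Finset ℕ => B.min < C.min) :=
        ⟨fun a b hab hba => absurd hba (lt_asymm hab)⟩
      refine List.Perm.eq_of_pairwise' (master T1 h1' 0).sorted (master T2 h2' 0).sorted ?_
      exact List.perm_of_nodup_nodup_toFinset_eq (blocks_nodup T1 h1' 0)
        (blocks_nodup T2 h2' 0) hparts
    have fam := fam_of_good T1 h1' 0
    rw [h1] at fam
    obtain ⟨T0, _, huniq⟩ := tree_exists_unique s.length s (le_refl _) 0 (blocksB T1 0) fam
    have e1 := huniq T1 ⟨h1, rfl⟩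
    have e2 := huniq T2 ⟨h2, hbl.symm⟩
    exact Subtype.ext (e1.trans e2.symm)
  have hsurj : Function.Surjective F := by
    rintro ⟨π, hNC, L, ⟨hnd, hLparts, hsorted⟩, hRef⟩
    have hLmem : ∀ B, B ∈ L ↔ B ∈ π.parts := by
      intro B
      rw [← hLparts, List.mem_toFinset]
    have fam : Fam s 0 L := by
      refine ⟨hs, ?_, ?_, ?_, hsorted, ?_, hRef⟩
      · intro x
        have h1 : (∃ B ∈ L, x ∈ B) ↔ x ∈ π.parts.sup id := by
          rw [Finset.mem_sup]
          constructor
          · rintro ⟨B, hB, hx⟩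
            exact ⟨B, (hLmem B).mp hB, hx⟩
          · rintro ⟨B, hB, hx⟩
            exact ⟨B, (hLmem B).mpr hB, hx⟩
        rw [h1, π.sup_parts, Finset.mem_Icc]
        omega
      · intro B hB
        exact π.nonempty_of_mem_parts ((hLmem B).mp hB)
      · refine hnd.pairwise_of_forall_ne ?_
        intro B hB C hC hne
        exact π.disjoint ((hLmem B).mp hB) ((hLmem C).mp hC) hne
      · intro B hB C hC x y z w h1 h2 h3 h4 h5 h6 h7
        by_contra hne
        exact hNC ⟨B, (hLmem B).mp hB, C, (hLmem C).mp hC, hne, x, y, z, w,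
          h1, h2, h3, h4, h5, h6, h7⟩
    obtain ⟨T, ⟨hTsig, hTbl⟩, _⟩ := tree_exists_unique s.length s (le_refl _) 0 L fam
    refine ⟨⟨T, hTsig⟩, ?_⟩
    refine Subtype.ext ?_
    show PTree.mkPartition s hs T hTsig = π
    refine Finpartition.ext ?_
    show (blocksB T 0).toFinset = π.parts
    rw [hTbl, hLparts]
  exact ⟨Equiv.ofBijective F ⟨hinj, hsurj⟩⟩
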